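/- arXiv:0910.2798 — 5 statements merged into one kernel-verified Lean document; each statement's English description precedes it below -/
import Mathlib

section
/- There are no odd exponential unitary perfect numbers; that is, there is no odd positive integer n satisfying σ^{(e)*}(n) = 2n. -/
open scoped Classical BigOperators

/-- `d` is a unitary divisor of `m`: `d ∣ m` and `gcd (d, m/d) = 1`. -/
def IsUnitaryDivisor (d m : ℕ) : Prop := d ∣ m ∧ Nat.gcd d (m / d) = 1

/-- `ω m` is the number of distinct prime divisors of `m`. -/
def omega (m : ℕ) : ℕ := m.primeFactors.card

/-- `d` is an exponential unitary divisor of `n`: `d` has the same prime factors as `n`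
and, at each such prime, the exponent of `d` is a unitary divisor of the exponent of `n`.
By convention `1` is the only e-unitary divisor of `1`. -/
def IsExpUnitaryDivisor (d n : ℕ) : Prop :=
  0 < d ∧ 0 < n ∧ d.primeFactors = n.primeFactors ∧
    ∀ p ∈ n.primeFactors, IsUnitaryDivisor (d.factorization p) (n.factorization p)

/-- `d` is an exponential divisor of `n`. -/
def IsExpDivisor (d n : ℕ) : Prop :=
  0 < d ∧ 0 < n ∧ d.primeFactors = n.primeFactors ∧
    ∀ p ∈ n.primeFactors, d.factorization p ∣ n.factorization p

/-- the sum of the e-unitary divisors of `n` -/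
noncomputable def sigmaEStar (n : ℕ) : ℕ :=
  ∑ d ∈ n.divisors.filter (fun d => IsExpUnitaryDivisor d n), d

/-- the number of the e-unitary divisors of `n` -/
noncomputable def tauEStar (n : ℕ) : ℕ :=
  (n.divisors.filter (fun d => IsExpUnitaryDivisor d n)).card

/-- the sum of the e-divisors of `n` -/
noncomputable def sigmaE (n : ℕ) : ℕ :=
  ∑ d ∈ n.divisors.filter (fun d => IsExpDivisor d n), d

/-- the number of the e-divisors of `n` -/
noncomputable def tauE (n : ℕ) : ℕ :=
  (n.divisors.filter (fun d => IsExpDivisor d n)).card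

/-- the number of unitary divisors of `m` -/
noncomputable def tauStar (m : ℕ) : ℕ :=
  (m.divisors.filter (fun d => IsUnitaryDivisor d m)).card

/-- the unitary analogue `φ*` of Euler's function: multiplicative with `φ*(p^a) = p^a - 1` -/
def phiStar (m : ℕ) : ℕ := ∏ p ∈ m.primeFactors, (p ^ m.factorization p - 1)

/-- the e-unitary Euler function `φ^{(e)*}` -/
def phiEStar (n : ℕ) : ℕ := ∏ p ∈ n.primeFactors, phiStar (n.factorization p)

/-- the exponential Euler function `φ^{(e)}` -/
def phiE (n : ℕ) : ℕ := ∏ p ∈ n.primeFactors, Nat.totient (n.factorization p)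

/-- the exponential unitary analogue of the Möbius function -/
def muEStar (n : ℕ) : ℤ := (-1) ^ (∑ p ∈ n.primeFactors, omega (n.factorization p))

noncomputable def Uset (a : ℕ) : Finset ℕ := a.divisors.filter (fun b => IsUnitaryDivisor b a)

noncomputable def Fp (p a : ℕ) : ℕ := ∑ b ∈ Uset a, p ^ b

lemma mem_Uset {b a : ℕ} : b ∈ Uset a ↔ (b ∣ a ∧ a ≠ 0) ∧ IsUnitaryDivisor b a := by
  simp [Uset, Nat.mem_divisors]

lemma Uset_one : Uset 1 = {1} := by
  ext b
  rw [mem_Uset, Finset.mem_singleton]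
  constructor
  · rintro ⟨⟨hb, -⟩, -⟩; exact Nat.dvd_one.1 hb
  · rintro rfl; exact ⟨⟨one_dvd 1, one_ne_zero⟩, one_dvd 1, by norm_num⟩

lemma Fp_one {p : ℕ} : Fp p 1 = p := by simp [Fp, Uset_one]

lemma one_mem_Uset {a : ℕ} (ha : a ≠ 0) : 1 ∈ Uset a :=
  mem_Uset.2 ⟨⟨one_dvd a, ha⟩, one_dvd a, by simp⟩

lemma self_mem_Uset {a : ℕ} (ha : a ≠ 0) : a ∈ Uset a :=
  mem_Uset.2 ⟨⟨dvd_rfl, ha⟩, dvd_rfl, by simp [Nat.div_self (Nat.pos_of_ne_zero ha)]⟩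

lemma compl_mem_Uset {a b : ℕ} (hb : b ∈ Uset a) : a / b ∈ Uset a := by
  obtain ⟨⟨hdvd, ha⟩, -, hg⟩ := mem_Uset.1 hb
  have h1 : a / b ∣ a := Nat.div_dvd_of_dvd hdvd
  have h2 : a / (a / b) = b := Nat.div_div_self hdvd ha
  exact mem_Uset.2 ⟨⟨h1, ha⟩, h1, by rw [h2, Nat.gcd_comm]; exact hg⟩

lemma compl_ne {a b : ℕ} (ha : 2 ≤ a) (hb : b ∈ Uset a) : a / b ≠ b := by
  obtain ⟨⟨hdvd, ha0⟩, -, hg⟩ := mem_Uset.1 hb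
  intro h
  rw [h, Nat.gcd_self] at hg
  subst hg
  rw [Nat.div_one] at h
  omega

lemma two_dvd_Fp {p a : ℕ} (hp : Odd p) (ha : 2 ≤ a) : 2 ∣ Fp p a := by
  have hcast : ((Fp p a : ℕ) : ZMod 2) = 0 := by
    have hp2 : ((p : ℕ) : ZMod 2) = 1 := by
      have := Nat.odd_iff.1 hp
      rw [← ZMod.natCast_mod, this]; norm_num
    unfold Fp
    push_cast
    rw [Finset.sum_congr rfl (fun b _ => by rw [hp2, one_pow])]
    refine Finset.sum_involution (fun b _ => a / b) (fun b hb => by decide)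
      (fun b hb _ => compl_ne ha hb) (fun b hb => compl_mem_Uset hb) (fun b hb => ?_)
    obtain ⟨⟨hdvd, ha0⟩, -, -⟩ := mem_Uset.1 hb
    exact Nat.div_div_self hdvd ha0
  exact (ZMod.natCast_eq_zero_iff _ 2).1 hcast

lemma Fp_ne {q a : ℕ} (hq : q.Prime) (ha : 2 ≤ a) : Fp q a ≠ 2 * q ^ a := by
  intro hF
  have ha0 : a ≠ 0 := by omega
  have h1 : (1 : ℕ) ∈ Uset a := one_mem_Uset ha0
  have hsa : a ∈ Uset a := self_mem_Uset ha0
  have h1' : (1 : ℕ) ∈ (Uset a).erase a :=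
    Finset.mem_erase.2 ⟨by omega, h1⟩
  have hsum : Fp q a = q ^ a + (q ^ 1 + ∑ b ∈ ((Uset a).erase a).erase 1, q ^ b) := by
    unfold Fp
    rw [← Finset.add_sum_erase _ _ hsa, ← Finset.add_sum_erase _ _ h1']
  have hR : q ^ 2 ∣ ∑ b ∈ ((Uset a).erase a).erase 1, q ^ b := by
    refine Finset.dvd_sum (fun b hb => ?_)
    have hb1 : b ≠ 1 := (Finset.mem_erase.1 hb).1
    have hba : b ≠ a := (Finset.mem_erase.1 (Finset.mem_erase.1 hb).2).1
    have hbU : b ∈ Uset a := (Finset.mem_erase.1 (Finset.mem_erase.1 hb).2).2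
    obtain ⟨⟨hdvd, ha0'⟩, -, -⟩ := mem_Uset.1 hbU
    have hb0 : b ≠ 0 := by rintro rfl; exact ha0' (zero_dvd_iff.1 hdvd)
    exact pow_dvd_pow q (by omega)
  set R := ∑ b ∈ ((Uset a).erase a).erase 1, q ^ b with hRdef
  have key : q ^ 1 + R = q ^ a := by rw [hF] at hsum; omega
  have hqa : q ^ 2 ∣ q ^ a := pow_dvd_pow q ha
  have hq1 : q ^ 2 ∣ q ^ 1 := by
    have := Nat.dvd_sub hqa hR
    rwa [← key, Nat.add_sub_cancel] at this
  have h' : q ^ 2 ≤ q := by simpa using Nat.le_of_dvd (pow_pos hq.pos 1) hq1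
  nlinarith [hq.two_le]

lemma factorization_prodPow_apply {s : Finset ℕ} (hs : ∀ p ∈ s, p.Prime)
    (e : {x // x ∈ s} → ℕ) (q : ℕ) :
    (∏ x ∈ s.attach, (x : ℕ) ^ e x).factorization q
      = if hq : q ∈ s then e ⟨q, hq⟩ else 0 := by
  rw [Nat.factorization_prod (S := s.attach) (g := fun x => (x : ℕ) ^ e x)
    (fun x _ => pow_ne_zero _ (hs x x.2).pos.ne')]
  rw [Finsupp.finset_sum_apply]
  have step : ∀ x : {y // y ∈ s}, x ∈ s.attach →
      (((x : ℕ) ^ e x).factorization) q = if (x : ℕ) = q then e x else 0 := by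
    intro x _
    rw [(hs x x.2).factorization_pow, Finsupp.single_apply]
  rw [Finset.sum_congr rfl step]
  by_cases hq : q ∈ s
  · rw [dif_pos hq]
    rw [Finset.sum_eq_single_of_mem ⟨q, hq⟩ (Finset.mem_attach _ _)]
    · rw [if_pos rfl]
    · intro b _ hb
      rw [if_neg (fun h => hb (Subtype.ext h))]
  · rw [dif_neg hq]
    exact Finset.sum_eq_zero (fun x _ => if_neg (fun h : (x : ℕ) = q => hq (h ▸ x.2)))

lemma sigmaEStar_eq_prod {n : ℕ} (hn : 0 < n) :
    sigmaEStar n = ∏ p ∈ n.primeFactors, Fp p (n.factorization p) := by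
  have hn0 : n ≠ 0 := hn.ne'
  have hprime : ∀ p ∈ n.primeFactors, p.Prime := fun p hp => Nat.prime_of_mem_primeFactors hp
  unfold sigmaEStar Fp
  rw [Finset.prod_sum]
  symm
  refine Finset.sum_nbij' (i := fun g => ∏ x ∈ n.primeFactors.attach, (x : ℕ) ^ g x.1 x.2)
    (j := fun d => fun p _ => d.factorization p) ?_ ?_ ?_ ?_ ?_
  · -- maps into filter
    intro g hg
    rw [Finset.mem_pi] at hg
    have hfac : ∀ q, (∏ x ∈ n.primeFactors.attach, (x : ℕ) ^ g x.1 x.2).factorization q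
        = if hq : q ∈ n.primeFactors then g q hq else 0 := by
      intro q
      exact factorization_prodPow_apply hprime (fun x => g x.1 x.2) q
    set d := ∏ x ∈ n.primeFactors.attach, (x : ℕ) ^ g x.1 x.2 with hd
    have hexp : ∀ p (hp : p ∈ n.primeFactors),
        (g p hp ∣ n.factorization p ∧ n.factorization p ≠ 0) ∧
          IsUnitaryDivisor (g p hp) (n.factorization p) := fun p hp => mem_Uset.1 (hg p hp)
    have hgne : ∀ p (hp : p ∈ n.primeFactors), g p hp ≠ 0 := by
      intro p hp h
      exact (hexp p hp).1.2 (zero_dvd_iff.1 (h ▸ (hexp p hp).1.1))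
    have hd0 : d ≠ 0 := by
      rw [hd, Finset.prod_ne_zero_iff]
      exact fun x _ => pow_ne_zero _ (hprime x x.2).pos.ne'
    have hsupp : d.primeFactors = n.primeFactors := by
      ext q
      rw [← Nat.support_factorization, Finsupp.mem_support_iff, hfac q]
      by_cases hq : q ∈ n.primeFactors
      · simp [hq, hgne q hq]
      · simp [hq]
    have hdvd : d ∣ n := by
      rw [← Nat.factorization_le_iff_dvd hd0 hn0]
      intro q
      rw [hfac q]
      by_cases hq : q ∈ n.primeFactors
      · rw [dif_pos hq]
        exact Nat.le_of_dvd (Nat.pos_of_ne_zero (hexp q hq).1.2) (hexp q hq).1.1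
      · simp [hq]
    refine Finset.mem_filter.2 ⟨Nat.mem_divisors.2 ⟨hdvd, hn0⟩,
      Nat.pos_of_ne_zero hd0, hn, hsupp, fun p hp => ?_⟩
    rw [hfac p, dif_pos hp]
    exact (hexp p hp).2
  · -- j maps into pi set
    intro d hd
    obtain ⟨hdmem, hdpos, -, -, hun⟩ := Finset.mem_filter.1 hd
    rw [Finset.mem_pi]
    intro p hp
    have hap : n.factorization p ≠ 0 := by
      rw [← Nat.support_factorization] at hp
      exact Finsupp.mem_support_iff.1 hp
    exact mem_Uset.2 ⟨⟨(hun p hp).1, hap⟩, hun p hp⟩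
  · -- j (i g) = g
    intro g hg
    funext p hp
    exact (factorization_prodPow_apply hprime (fun x => g x.1 x.2) p).trans (dif_pos hp)
  · -- i (j d) = d
    intro d hd
    obtain ⟨hdmem, hdpos, -, hPF, -⟩ := Finset.mem_filter.1 hd
    have hd0 : d ≠ 0 := hdpos.ne'
    conv_rhs => rw [← Nat.factorization_prod_pow_eq_self hd0]
    rw [Finsupp.prod, Nat.support_factorization, hPF, ← Finset.prod_attach n.primeFactors (fun a => a ^ d.factorization a)]
  · -- values agree
    intro g hg
    rfl

/-- There are no odd exponential unitary perfect numbers. -/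
theorem no_odd_e_unitary_perfect :
    ¬ ∃ n : ℕ, 0 < n ∧ Odd n ∧ sigmaEStar n = 2 * n := by
  rintro ⟨n, hn, hodd, hσ⟩
  have hn0 : n ≠ 0 := hn.ne'
  rw [sigmaEStar_eq_prod hn] at hσ
  have hprime : ∀ p ∈ n.primeFactors, p.Prime := fun p hp => Nat.prime_of_mem_primeFactors hp
  have hpodd : ∀ p ∈ n.primeFactors, Odd p := by
    intro p hp
    rcases (hprime p hp).eq_two_or_odd' with h2 | h
    · exfalso
      have : (2 : ℕ) ∣ n := h2 ▸ Nat.dvd_of_mem_primeFactors hp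
      rw [Nat.odd_iff] at hodd
      omega
    · exact h
  have hapos : ∀ p ∈ n.primeFactors, 1 ≤ n.factorization p := by
    intro p hp
    rw [← Nat.support_factorization, Finsupp.mem_support_iff] at hp
    omega
  have hnprod : n = ∏ p ∈ n.primeFactors, p ^ n.factorization p := by
    conv_lhs => rw [← Nat.factorization_prod_pow_eq_self hn0]
    rw [Finsupp.prod, Nat.support_factorization]
  set S := n.primeFactors.filter (fun p => 2 ≤ n.factorization p) with hS
  by_cases hSe : S = ∅
  · -- squarefree case
    have h1 : ∀ p ∈ n.primeFactors, n.factorization p = 1 := by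
      intro p hp
      have h2 : ¬ 2 ≤ n.factorization p := fun h =>
        (Finset.notMem_empty p) (hSe ▸ Finset.mem_filter.2 ⟨hp, h⟩)
      have := hapos p hp
      omega
    have heq : ∏ p ∈ n.primeFactors, Fp p (n.factorization p) = n := by
      rw [Finset.prod_congr rfl (fun p hp => by rw [h1 p hp, Fp_one])]
      conv_rhs => rw [hnprod]
      exact Finset.prod_congr rfl (fun p hp => by rw [h1 p hp, pow_one])
    rw [heq] at hσ
    omega
  · obtain ⟨q, hqS⟩ := Finset.nonempty_iff_ne_empty.2 hSe
    have hqP : q ∈ n.primeFactors := (Finset.mem_filter.1 hqS).1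
    have hq2 : 2 ≤ n.factorization q := (Finset.mem_filter.1 hqS).2
    by_cases hsingle : ∀ p ∈ S, p = q
    · -- exactly one prime with exponent ≥ 2
      have ha1 : ∀ p ∈ n.primeFactors.erase q, n.factorization p = 1 := by
        intro p hp
        have hpq : p ≠ q := (Finset.mem_erase.1 hp).1
        have hpP : p ∈ n.primeFactors := (Finset.mem_erase.1 hp).2
        have h2 : ¬ 2 ≤ n.factorization p := fun h =>
          hpq (hsingle p (Finset.mem_filter.2 ⟨hpP, h⟩))
        have := hapos p hpP
        omega
      have hsplit : ∏ p ∈ n.primeFactors, Fp p (n.factorization p)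
          = Fp q (n.factorization q) * ∏ p ∈ n.primeFactors.erase q, p := by
        rw [← Finset.mul_prod_erase _ _ hqP]
        congr 1
        exact Finset.prod_congr rfl (fun p hp => by rw [ha1 p hp, Fp_one])
      have hnsplit : n = q ^ n.factorization q * ∏ p ∈ n.primeFactors.erase q, p := by
        conv_lhs => rw [hnprod]
        rw [← Finset.mul_prod_erase _ _ hqP]
        congr 1
        exact Finset.prod_congr rfl (fun p hp => by rw [ha1 p hp, pow_one])
      have hσ' : Fp q (n.factorization q) * ∏ p ∈ n.primeFactors.erase q, p
          = (2 * q ^ n.factorization q) * ∏ p ∈ n.primeFactors.erase q, p := by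
        rw [← hsplit, hσ]
        conv_lhs => rw [hnsplit]
        ring
      have hMpos : 0 < ∏ p ∈ n.primeFactors.erase q, p :=
        Finset.prod_pos (fun p hp => (hprime p (Finset.mem_erase.1 hp).2).pos)
      have := Nat.eq_of_mul_eq_mul_right hMpos hσ'
      exact Fp_ne (hprime q hqP) hq2 this
    · -- two primes with exponent ≥ 2
      push_neg at hsingle
      obtain ⟨q', hq'S, hq'ne⟩ := hsingle
      have hq'P : q' ∈ n.primeFactors := (Finset.mem_filter.1 hq'S).1
      have hq'2 : 2 ≤ n.factorization q' := (Finset.mem_filter.1 hq'S).2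
      have h4 : 4 ∣ ∏ p ∈ n.primeFactors, Fp p (n.factorization p) := by
        rw [← Finset.mul_prod_erase _ _ hqP]
        have d1 : 2 ∣ Fp q (n.factorization q) := two_dvd_Fp (hpodd q hqP) hq2
        have d2 : 2 ∣ ∏ p ∈ n.primeFactors.erase q, Fp p (n.factorization p) :=
          dvd_trans (two_dvd_Fp (hpodd q' hq'P) hq'2)
            (Finset.dvd_prod_of_mem _ (Finset.mem_erase.2 ⟨hq'ne, hq'P⟩))
        exact mul_dvd_mul d1 d2
      rw [hσ] at h4
      rw [Nat.odd_iff] at hodd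
      omega
end

section
/- The limsup as n → ∞ of (log φ^{(e)*}(n) · log log n) / log n equals (log 4)/5. -/
open scoped Classical BigOperators

section Aux


lemma prod_pf_eq {a : ℕ} (ha : a ≠ 0) :
    ∏ p ∈ a.primeFactors, p ^ a.factorization p = a := by
  have := Nat.factorization_prod_pow_eq_self ha
  rwa [Nat.prod_factorization_eq_prod_primeFactors] at this

lemma two_le_pf_pow {a p : ℕ} (hp : p ∈ a.primeFactors) : 2 ≤ p ^ a.factorization p := by
  have hp' : p.Prime := Nat.prime_of_mem_primeFactors hp
  have h1 : 0 < a.factorization p := hp'.factorization_pos_of_dvd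
    (Nat.mem_primeFactors.1 hp).2.2 (Nat.dvd_of_mem_primeFactors hp)
  calc 2 = 2 ^ 1 := rfl
  _ ≤ p ^ 1 := Nat.pow_le_pow_left hp'.two_le 1
  _ ≤ p ^ a.factorization p := Nat.pow_le_pow_right hp'.pos h1

lemma one_le_phiStar (a : ℕ) : 1 ≤ phiStar a := by
  apply Finset.one_le_prod'
  intro p hp
  have := two_le_pf_pow hp
  omega

lemma phiStar_le_self {a : ℕ} (ha : a ≠ 0) : phiStar a ≤ a := by
  calc phiStar a ≤ ∏ p ∈ a.primeFactors, p ^ a.factorization p :=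
        Finset.prod_le_prod' fun p _ => Nat.sub_le _ _
    _ = a := prod_pf_eq ha

lemma prod_sub_one_le {s : Finset ℕ} (hs : s.Nonempty) (f : ℕ → ℕ)
    (hf : ∀ i ∈ s, 1 ≤ f i) : ∏ i ∈ s, (f i - 1) ≤ (∏ i ∈ s, f i) - 1 := by
  induction hs using Finset.Nonempty.cons_induction with
  | singleton i => simp
  | cons i s his hs ih =>
    rw [Finset.prod_cons, Finset.prod_cons]
    have h1 : ∀ j ∈ s, 1 ≤ f j := fun j hj => hf j (Finset.mem_cons_of_mem hj)
    have hP : 1 ≤ ∏ j ∈ s, f j := Finset.one_le_prod' h1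
    calc (f i - 1) * ∏ j ∈ s, (f j - 1) ≤ (f i - 1) * ((∏ j ∈ s, f j) - 1) :=
          Nat.mul_le_mul_left _ (ih h1)
      _ ≤ (f i - 1) * ∏ j ∈ s, f j := Nat.mul_le_mul_left _ (Nat.sub_le _ _)
      _ = f i * ∏ j ∈ s, f j - ∏ j ∈ s, f j := by rw [Nat.sub_mul, one_mul]
      _ ≤ f i * ∏ j ∈ s, f j - 1 := Nat.sub_le_sub_left hP _

lemma phiStar_le_sub_one {a : ℕ} (ha : 2 ≤ a) : phiStar a ≤ a - 1 := by
  have hne : a.primeFactors.Nonempty := Nat.nonempty_primeFactors.2 (by omega)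
  calc phiStar a ≤ (∏ p ∈ a.primeFactors, p ^ a.factorization p) - 1 :=
        prod_sub_one_le hne _ fun p hp => by have := two_le_pf_pow hp; omega
    _ = a - 1 := by rw [prod_pf_eq (by omega)]

lemma pow_five_le_four_pow {a : ℕ} (ha : 9 ≤ a) : a ^ 5 ≤ 4 ^ a := by
  induction a, ha using Nat.le_induction with
  | base => norm_num
  | succ n h ih =>
    have h4 : 9 * n^4 ≤ n^5 := by calc 9 * n^4 ≤ n * n^4 := Nat.mul_le_mul_right _ h
                                    _ = n^5 := by ring
    have h3 : 9 * n^3 ≤ n^4 := by calc 9 * n^3 ≤ n * n^3 := Nat.mul_le_mul_right _ h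
                                    _ = n^4 := by ring
    have h2 : 9 * n^2 ≤ n^3 := by calc 9 * n^2 ≤ n * n^2 := Nat.mul_le_mul_right _ h
                                    _ = n^3 := by ring
    have h1 : 9 * n ≤ n^2 := by calc 9 * n ≤ n * n := Nat.mul_le_mul_right _ h
                                    _ = n^2 := by ring
    have key : (n + 1) ^ 5 ≤ 4 * n ^ 5 := by nlinarith [h4, h3, h2, h1, h]
    calc (n+1)^5 ≤ 4 * n^5 := key
      _ ≤ 4 * 4 ^ n := Nat.mul_le_mul_left _ ih
      _ = 4 ^ (n+1) := by rw [pow_succ]; ring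

lemma phiStar_pow_five_le (a : ℕ) : phiStar a ^ 5 ≤ 4 ^ a := by
  rcases Nat.lt_or_ge a 9 with h | h
  · rcases Nat.lt_or_ge a 2 with h2 | h2
    · interval_cases a <;> simp [phiStar]
    · have h1 : phiStar a ≤ a - 1 := phiStar_le_sub_one h2
      have : (a-1)^5 ≤ 4 ^ a := by interval_cases a <;> norm_num
      calc phiStar a ^ 5 ≤ (a-1)^5 := Nat.pow_le_pow_left h1 5
        _ ≤ 4 ^ a := this
  · calc phiStar a ^ 5 ≤ a ^ 5 := Nat.pow_le_pow_left (phiStar_le_self (by omega)) 5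
      _ ≤ 4 ^ a := pow_five_le_four_pow h


lemma one_le_phiEStar' (n : ℕ) : 1 ≤ phiEStar n :=
  Finset.one_le_prod' fun p _ => one_le_phiStar _



lemma log_phiStar_le (a : ℕ) : Real.log (phiStar a) ≤ (a : ℝ) * Real.log 4 / 5 := by
  have h5 : (0:ℝ) < 5 := by norm_num
  rw [le_div_iff₀ h5]
  have : Real.log (phiStar a) * 5 = Real.log ((phiStar a : ℝ) ^ (5:ℕ)) := by
    rw [Real.log_pow]; ring
  rw [this]
  have hcast : ((phiStar a : ℝ)) ^ (5:ℕ) = ((phiStar a ^ 5 : ℕ) : ℝ) := by push_cast; ring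
  rw [hcast]
  have h4 : ((4:ℕ):ℝ) ^ a = ((4 ^ a : ℕ) : ℝ) := by push_cast; ring
  calc Real.log ((phiStar a ^ 5 : ℕ) : ℝ) ≤ Real.log ((4 ^ a : ℕ) : ℝ) := by
        have h1 : (0:ℝ) < ((phiStar a ^ 5 : ℕ) : ℝ) := by
          have := one_le_phiStar a
          positivity
        apply Real.log_le_log h1
        exact_mod_cast phiStar_pow_five_le a
    _ = (a : ℝ) * Real.log 4 := by
        push_cast
        rw [Real.log_pow]

lemma log_phiEStar_eq {n : ℕ} (hn : n ≠ 0) :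
    Real.log (phiEStar n) = ∑ p ∈ n.primeFactors, Real.log (phiStar (n.factorization p)) := by
  unfold phiEStar
  rw [Nat.cast_prod, Real.log_prod]
  intro p hp
  have := one_le_phiStar (n.factorization p)
  positivity

lemma log_eq_sum {n : ℕ} (hn : n ≠ 0) :
    Real.log n = ∑ p ∈ n.primeFactors, (n.factorization p : ℝ) * Real.log p := by
  conv_lhs => rw [← prod_pf_eq hn]
  rw [Nat.cast_prod, Real.log_prod]
  · apply Finset.sum_congr rfl
    intro p hp
    push_cast
    rw [Real.log_pow]
  · intro p hp
    have hp2 := (Nat.prime_of_mem_primeFactors hp).two_le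
    have : (0:ℕ) < p ^ n.factorization p := Nat.pow_pos (by omega)
    positivity

lemma tendsto_error (δ : ℝ) (hδ : 0 < δ) (hδ1 : δ < 1) :
    Filter.Tendsto
      (fun t : ℝ => (Real.exp ((1-δ)*Real.log t) + 1) * (Real.log t + 1) * Real.log t / t)
      Filter.atTop (nhds 0) := by
  have h1 : Filter.Tendsto (fun t : ℝ => 4 * (Real.log t ^ (2:ℝ) / t ^ δ))
      Filter.atTop (nhds 0) := by
    have h0 := (isLittleO_log_rpow_rpow_atTop 2 hδ).tendsto_div_nhds_zero
    have := h0.const_mul (4:ℝ)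
    simpa using this
  apply squeeze_zero' ?_ ?_ h1
  · filter_upwards [Filter.eventually_ge_atTop (Real.exp 1)] with t ht
    have ht1 : (1:ℝ) ≤ t := le_trans (by nlinarith [Real.add_one_le_exp (1:ℝ)]) ht
    have hlt : 0 ≤ Real.log t := Real.log_nonneg ht1
    positivity
  · filter_upwards [Filter.eventually_ge_atTop (Real.exp 1)] with t ht
    have ht1 : (1:ℝ) ≤ t := le_trans (by nlinarith [Real.add_one_le_exp (1:ℝ)]) ht
    have ht0 : (0:ℝ) < t := lt_of_lt_of_le one_pos ht1
    have hlt : (1:ℝ) ≤ Real.log t := (Real.le_log_iff_exp_le ht0).2 ht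
    have hE : Real.exp ((1-δ)*Real.log t) = t ^ (1-δ) := by
      rw [Real.rpow_def_of_pos ht0, mul_comm]
    have hx : (1:ℝ) ≤ t ^ (1-δ) := by
      calc (1:ℝ) = 1 ^ (1-δ) := (Real.one_rpow _).symm
      _ ≤ t ^ (1-δ) := Real.rpow_le_rpow zero_le_one ht1 (by linarith)
    set x := t ^ (1-δ) with hxdef
    set l := Real.log t with hldef
    have hb : (x+1)*(l+1)*l ≤ 4*(x*(l*l)) := by nlinarith [hx, hlt, mul_le_mul hx hlt zero_le_one (by linarith : (0:ℝ) ≤ x)]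
    have h2 : l ^ (2:ℝ) = l*l := by
      rw [show (2:ℝ) = ((2:ℕ):ℝ) by norm_num, Real.rpow_natCast]; ring
    have htd : (0:ℝ) < t ^ δ := Real.rpow_pos_of_pos ht0 δ
    have key : x = t / t ^ δ := by
      rw [hxdef, Real.rpow_sub ht0, Real.rpow_one]
    calc (Real.exp ((1-δ)*Real.log t) + 1) * (Real.log t + 1) * Real.log t / t
        = (x+1)*(l+1)*l/t := by rw [hE]
      _ ≤ 4*(x*(l*l))/t := by gcongr
      _ = 4 * (l ^ (2:ℝ) / t ^ δ) := by rw [h2, key]; field_simp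

lemma upper_eventually (ε : ℝ) (hε : 0 < ε) :
    ∀ᶠ n : ℕ in Filter.atTop,
      Real.log (phiEStar n) * Real.log (Real.log n) / Real.log n ≤ Real.log 4 / 5 + ε := by
  have hc : 0 < Real.log 4 / 5 := div_pos (Real.log_pos (by norm_num)) (by norm_num)
  set c : ℝ := Real.log 4 / 5 with hcdef
  set δ : ℝ := min (1/2) (ε/(2*c+1)) with hδdef
  have hδ0 : 0 < δ := lt_min (by norm_num) (by positivity)
  have hδh : δ ≤ 1/2 := min_le_left _ _
  have h1δ : (0:ℝ) < 1 - δ := by linarith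
  have hδε : (2*c+1)*δ ≤ ε := by
    have h := min_le_right (1/2) (ε/(2*c+1))
    have h2 : (0:ℝ) < 2*c+1 := by linarith
    calc (2*c+1)*δ ≤ (2*c+1)*(ε/(2*c+1)) := mul_le_mul_of_nonneg_left h h2.le
      _ = ε := by field_simp
  have hfinal : c/(1-δ) + δ ≤ c + ε := by
    have : c/(1-δ) ≤ c + 2*c*δ := by
      rw [div_le_iff₀ h1δ]
      nlinarith [mul_nonneg (mul_nonneg hc.le hδ0.le) (by linarith : (0:ℝ) ≤ 1 - 2*δ)]
    linarith
  have hlogN : Filter.Tendsto (fun n:ℕ => Real.log n) Filter.atTop Filter.atTop :=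
    Real.tendsto_log_atTop.comp tendsto_natCast_atTop_atTop
  have hloglogN : Filter.Tendsto (fun n:ℕ => Real.log (Real.log n)) Filter.atTop Filter.atTop :=
    Real.tendsto_log_atTop.comp hlogN
  have hET := (tendsto_error δ hδ0 (by linarith)).comp hlogN
  have hE3 : ∀ᶠ n:ℕ in Filter.atTop,
      (Real.exp ((1-δ)*Real.log (Real.log n)) + 1) * (Real.log (Real.log n) + 1)
        * Real.log (Real.log n) / Real.log n ≤ δ := by
    have := hET.eventually (eventually_le_nhds hδ0)
    exact this
  filter_upwards [Filter.eventually_ge_atTop 2, hloglogN.eventually_ge_atTop 1, hE3]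
    with n hn2 hLL1 herr
  have hn0 : n ≠ 0 := by omega
  set L := Real.log n with hLdef
  set LL := Real.log L with hLLdef
  have hL0 : 0 < L := Real.log_pos (by exact_mod_cast hn2)
  have hLL0 : 0 < LL := lt_of_lt_of_le one_pos hLL1
  have hS := log_phiEStar_eq hn0
  have hLsum : L = ∑ p ∈ n.primeFactors, (n.factorization p : ℝ) * Real.log p :=
    log_eq_sum hn0
  have hterm0 : ∀ p ∈ n.primeFactors, 0 ≤ Real.log (phiStar (n.factorization p)) :=
    fun p _ => Real.log_nonneg (by exact_mod_cast one_le_phiStar _)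
  have htermL : ∀ p ∈ n.primeFactors, 0 ≤ (n.factorization p : ℝ) * Real.log p :=
    fun p hp => mul_nonneg (Nat.cast_nonneg _)
      (Real.log_nonneg (by exact_mod_cast (Nat.prime_of_mem_primeFactors hp).one_lt.le))
  set big := n.primeFactors.filter (fun p : ℕ => (1-δ)*LL ≤ Real.log (p:ℝ)) with hbigdef
  set small := n.primeFactors.filter (fun p : ℕ => ¬ ((1-δ)*LL ≤ Real.log (p:ℝ))) with hsmalldef
  have hsplit : Real.log (phiEStar n)
      = (∑ p ∈ big, Real.log (phiStar (n.factorization p)))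
        + (∑ p ∈ small, Real.log (phiStar (n.factorization p))) := by
    rw [hS, Finset.sum_filter_add_sum_filter_not]
  have hbigsum : ∑ p ∈ big, (n.factorization p : ℝ) ≤ L / ((1-δ)*LL) := by
    rw [le_div_iff₀ (by positivity)]
    calc (∑ p ∈ big, (n.factorization p:ℝ)) * ((1-δ)*LL)
        = ∑ p ∈ big, (n.factorization p:ℝ) * ((1-δ)*LL) := by rw [Finset.sum_mul]
      _ ≤ ∑ p ∈ big, (n.factorization p:ℝ) * Real.log p :=
          Finset.sum_le_sum (fun p hp =>
            mul_le_mul_of_nonneg_left (Finset.mem_filter.1 hp).2 (Nat.cast_nonneg _))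
      _ ≤ ∑ p ∈ n.primeFactors, (n.factorization p:ℝ) * Real.log p :=
          Finset.sum_le_sum_of_subset_of_nonneg (Finset.filter_subset _ _)
            (fun p hp _ => htermL p hp)
      _ = L := hLsum.symm
  have hbig : ∑ p ∈ big, Real.log (phiStar (n.factorization p)) ≤ c * (L/((1-δ)*LL)) := by
    calc ∑ p ∈ big, Real.log (phiStar (n.factorization p))
        ≤ ∑ p ∈ big, (n.factorization p:ℝ) * Real.log 4 / 5 :=
          Finset.sum_le_sum (fun p _ => log_phiStar_le _)
      _ = c * ∑ p ∈ big, (n.factorization p:ℝ) := by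
          rw [Finset.mul_sum]
          exact Finset.sum_congr rfl (fun p _ => by rw [hcdef]; ring)
      _ ≤ c * (L/((1-δ)*LL)) := mul_le_mul_of_nonneg_left hbigsum hc.le
  set y := Real.exp ((1-δ)*LL) with hydef
  have hy0 : 0 < y := Real.exp_pos _
  have hcard : (small.card : ℝ) ≤ y + 1 := by
    have hsub : small ⊆ Finset.range (⌊y⌋₊ + 1) := by
      intro p hp
      obtain ⟨hpf, hplt⟩ := Finset.mem_filter.1 hp
      push_neg at hplt
      have hp0 : 0 < p := (Nat.prime_of_mem_primeFactors hpf).pos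
      have hpy : (p:ℝ) < y := by
        rw [hydef]
        exact (Real.log_lt_iff_lt_exp (by exact_mod_cast hp0)).1 hplt
      exact Finset.mem_range.2 (Nat.lt_succ_of_le (Nat.le_floor hpy.le))
    have h1 : small.card ≤ ⌊y⌋₊ + 1 := by
      have := Finset.card_le_card hsub
      rwa [Finset.card_range] at this
    have h2 : (⌊y⌋₊ : ℝ) ≤ y := Nat.floor_le hy0.le
    calc (small.card : ℝ) ≤ ((⌊y⌋₊ + 1 : ℕ) : ℝ) := by exact_mod_cast h1
      _ ≤ y + 1 := by push_cast; linarith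
  have hsmallterm : ∀ p ∈ small, Real.log (phiStar (n.factorization p)) ≤ LL + 1 := by
    intro p hp
    obtain ⟨hpf, _⟩ := Finset.mem_filter.1 hp
    have hp' := Nat.prime_of_mem_primeFactors hpf
    have ha1 : 0 < n.factorization p :=
      hp'.factorization_pos_of_dvd hn0 (Nat.dvd_of_mem_primeFactors hpf)
    have haL : (n.factorization p : ℝ) * Real.log 2 ≤ L := by
      calc (n.factorization p:ℝ) * Real.log 2
          ≤ (n.factorization p:ℝ) * Real.log p := by
            apply mul_le_mul_of_nonneg_left _ (Nat.cast_nonneg _)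
            apply Real.log_le_log (by norm_num)
            exact_mod_cast hp'.two_le
        _ ≤ ∑ q ∈ n.primeFactors, (n.factorization q:ℝ) * Real.log q :=
            Finset.single_le_sum htermL hpf
        _ = L := hLsum.symm
    have hlog2 : (1:ℝ)/2 < Real.log 2 := by
      have := Real.log_two_gt_d9; linarith
    have ha2L : (n.factorization p : ℝ) ≤ 2 * L := by
      nlinarith [Nat.cast_nonneg (α:=ℝ) (n.factorization p)]
    have hlog2' : Real.log 2 ≤ 1 := by
      have := Real.log_two_lt_d9; linarith
    calc Real.log (phiStar (n.factorization p))
        ≤ Real.log (n.factorization p) := by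
          apply Real.log_le_log (by exact_mod_cast one_le_phiStar _ |>.trans_lt' zero_lt_one)
          exact_mod_cast phiStar_le_self ha1.ne'
      _ ≤ Real.log (2*L) := by
          apply Real.log_le_log (by exact_mod_cast ha1) ha2L
      _ = Real.log 2 + LL := Real.log_mul two_ne_zero hL0.ne'
      _ ≤ LL + 1 := by linarith
  have hsmall : ∑ p ∈ small, Real.log (phiStar (n.factorization p)) ≤ (y+1)*(LL+1) := by
    calc ∑ p ∈ small, Real.log (phiStar (n.factorization p))
        ≤ ∑ _p ∈ small, (LL+1) := Finset.sum_le_sum hsmallterm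
      _ = (small.card:ℝ) * (LL+1) := by rw [Finset.sum_const, nsmul_eq_mul]
      _ ≤ (y+1)*(LL+1) := mul_le_mul_of_nonneg_right hcard (by linarith)
  have hStotal : Real.log (phiEStar n) ≤ c * (L/((1-δ)*LL)) + (y+1)*(LL+1) := by
    rw [hsplit]; exact add_le_add hbig hsmall
  have hS0 : 0 ≤ Real.log (phiEStar n) :=
    Real.log_nonneg (by exact_mod_cast one_le_phiEStar' n)
  calc Real.log (phiEStar n) * LL / L
      ≤ (c * (L/((1-δ)*LL)) + (y+1)*(LL+1)) * LL / L := by gcongr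
    _ = c/(1-δ) + (y+1)*(LL+1)*LL/L := by field_simp
    _ ≤ c/(1-δ) + δ := by
        have : (y+1)*(LL+1)*LL/L ≤ δ := herr
        linarith
    _ ≤ c + ε := hfinal



lemma centralBinom_le_primorial_mul (n : ℕ) (hn : 0 < n) :
    Nat.centralBinom n ≤ (2*n) ^ (Nat.sqrt (2*n)) * primorial (2*n) := by
  have h2n : 0 < 2*n := by omega
  set B := Nat.centralBinom n with hBdef
  have hB0 : 0 < B := Nat.centralBinom_pos n
  have hkey : ∀ p, p ^ B.factorization p ≤ 2*n := by
    intro p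
    exact Nat.pow_factorization_choose_le h2n
  have hsplit := Finset.prod_filter_mul_prod_filter_not B.primeFactors
    (fun p => p ≤ Nat.sqrt (2*n)) (fun p => p ^ B.factorization p)
  have hsmall : ∏ p ∈ B.primeFactors.filter (fun p => p ≤ Nat.sqrt (2*n)),
      p ^ B.factorization p ≤ (2*n) ^ (Nat.sqrt (2*n)) := by
    calc ∏ p ∈ B.primeFactors.filter (fun p => p ≤ Nat.sqrt (2*n)), p ^ B.factorization p
        ≤ ∏ _p ∈ B.primeFactors.filter (fun p => p ≤ Nat.sqrt (2*n)), (2*n) :=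
          Finset.prod_le_prod' (fun p _ => hkey p)
      _ = (2*n) ^ (B.primeFactors.filter (fun p => p ≤ Nat.sqrt (2*n))).card :=
          (Finset.prod_const _)
      _ ≤ (2*n) ^ (Nat.sqrt (2*n)) := by
          apply Nat.pow_le_pow_right h2n
          have hsub : B.primeFactors.filter (fun p => p ≤ Nat.sqrt (2*n))
              ⊆ Finset.Icc 1 (Nat.sqrt (2*n)) := by
            intro p hp
            obtain ⟨hpf, hple⟩ := Finset.mem_filter.1 hp
            exact Finset.mem_Icc.2 ⟨(Nat.prime_of_mem_primeFactors hpf).pos, hple⟩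
          calc (B.primeFactors.filter (fun p => p ≤ Nat.sqrt (2*n))).card
              ≤ (Finset.Icc 1 (Nat.sqrt (2*n))).card := Finset.card_le_card hsub
            _ = Nat.sqrt (2*n) := by rw [Nat.card_Icc]; omega
  have hlarge : ∏ p ∈ B.primeFactors.filter (fun p => ¬ (p ≤ Nat.sqrt (2*n))),
      p ^ B.factorization p ≤ primorial (2*n) := by
    have hstep : ∏ p ∈ B.primeFactors.filter (fun p => ¬ (p ≤ Nat.sqrt (2*n))),
        p ^ B.factorization p
        ≤ ∏ p ∈ B.primeFactors.filter (fun p => ¬ (p ≤ Nat.sqrt (2*n))), p := by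
      apply Finset.prod_le_prod'
      intro p hp
      obtain ⟨hpf, hpgt⟩ := Finset.mem_filter.1 hp
      push_neg at hpgt
      have hp' := Nat.prime_of_mem_primeFactors hpf
      have hν1 : 0 < B.factorization p := hp'.factorization_pos_of_dvd hB0.ne'
        (Nat.dvd_of_mem_primeFactors hpf)
      have hp2 : 2*n < p*p := by have := Nat.sqrt_lt'.1 hpgt; nlinarith
      have hν2 : B.factorization p < 2 := by
        by_contra h
        push_neg at h
        have : p*p ≤ p ^ B.factorization p := by
          calc p*p = p^2 := by ring
          _ ≤ p ^ B.factorization p := Nat.pow_le_pow_right hp'.pos h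
        have := hkey p
        omega
      have : B.factorization p = 1 := by omega
      rw [this, pow_one]
    refine hstep.trans ?_
    apply Finset.prod_le_prod_of_subset_of_one_le'
    · intro p hp
      obtain ⟨hpf, _⟩ := Finset.mem_filter.1 hp
      have hp' := Nat.prime_of_mem_primeFactors hpf
      have hν1 : 0 < B.factorization p := hp'.factorization_pos_of_dvd hB0.ne'
        (Nat.dvd_of_mem_primeFactors hpf)
      have hple : p ≤ 2*n := by
        have h1 : p ≤ p ^ B.factorization p := Nat.le_self_pow hν1.ne' p
        exact h1.trans (hkey p)
      exact Finset.mem_filter.2 ⟨Finset.mem_range.2 (by omega), hp'⟩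
    · intro p hp _
      exact (Finset.mem_filter.1 hp).2.pos
  calc B = ∏ p ∈ B.primeFactors, p ^ B.factorization p := (prod_pf_eq hB0.ne').symm
    _ = (∏ p ∈ B.primeFactors.filter (fun p => p ≤ Nat.sqrt (2*n)), p ^ B.factorization p)
        * ∏ p ∈ B.primeFactors.filter (fun p => ¬ (p ≤ Nat.sqrt (2*n))), p ^ B.factorization p :=
        hsplit.symm
    _ ≤ (2*n) ^ (Nat.sqrt (2*n)) * primorial (2*n) := Nat.mul_le_mul hsmall hlarge

lemma primorial_mono' : Monotone primorial := by
  intro a b hab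
  apply Finset.prod_le_prod_of_subset_of_one_le'
  · apply Finset.filter_subset_filter
    exact Finset.range_subset_range.2 (by omega)
  · intro p hp _
    exact (Finset.mem_filter.1 hp).2.pos

lemma nat_ineq {x : ℕ} (hx : 8 ≤ x) :
    4 ^ (x/2) ≤ x * (x ^ (Nat.sqrt x) * primorial x) := by
  set n := x/2 with hndef
  have hn4 : 4 ≤ n := by omega
  have h2n : 2*n ≤ x := by omega
  have h1 : 4 ^ n < n * Nat.centralBinom n := Nat.four_pow_lt_mul_centralBinom n hn4
  have h2 : Nat.centralBinom n ≤ (2*n) ^ (Nat.sqrt (2*n)) * primorial (2*n) :=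
    centralBinom_le_primorial_mul n (by omega)
  have h3 : (2*n) ^ (Nat.sqrt (2*n)) ≤ x ^ (Nat.sqrt x) := by
    calc (2*n) ^ (Nat.sqrt (2*n)) ≤ x ^ (Nat.sqrt (2*n)) :=
        Nat.pow_le_pow_left h2n _
      _ ≤ x ^ (Nat.sqrt x) := Nat.pow_le_pow_right (by omega) (Nat.sqrt_le_sqrt h2n)
  have h4 : primorial (2*n) ≤ primorial x := primorial_mono' h2n
  calc 4 ^ n ≤ n * Nat.centralBinom n := h1.le
    _ ≤ n * ((2*n) ^ (Nat.sqrt (2*n)) * primorial (2*n)) := Nat.mul_le_mul_left _ h2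
    _ ≤ x * (x ^ (Nat.sqrt x) * primorial x) :=
        Nat.mul_le_mul (by omega) (Nat.mul_le_mul h3 h4)

lemma sqrt_log_littleO :
    ∀ᶠ t : ℝ in Filter.atTop, (1 + Real.sqrt t) * Real.log t ≤ (Real.log 4 - 1)/4 * t := by
  have ha : 0 < (Real.log 4 - 1)/4 := by
    have h4 : (1.3862943606:ℝ) < Real.log 4 := by
      have := Real.log_two_gt_d9
      have h42 : Real.log 4 = 2 * Real.log 2 := by
        rw [show (4:ℝ) = 2^2 by norm_num, Real.log_pow]; push_cast; ring
      rw [h42]; linarith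
    linarith
  have h1 : (fun t : ℝ => (1 + Real.sqrt t) * Real.log t) =o[Filter.atTop] (fun t => t) := by
    have hlog : (fun t : ℝ => Real.log t) =o[Filter.atTop] (fun t => t) :=
      Real.isLittleO_log_id_atTop
    have hsq : (fun t : ℝ => Real.sqrt t * Real.log t) =o[Filter.atTop] (fun t => t) := by
      have hs : (fun t : ℝ => Real.log t) =o[Filter.atTop] (fun t : ℝ => Real.sqrt t) := by
        have := isLittleO_log_rpow_atTop (one_half_pos)
        apply this.congr' (Filter.EventuallyEq.refl _ _)
        filter_upwards with t
        exact (Real.sqrt_eq_rpow t).symm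
      have hmul := (Asymptotics.isBigO_refl (fun t : ℝ => Real.sqrt t) Filter.atTop).mul_isLittleO hs
      apply hmul.congr' (Filter.EventuallyEq.refl _ _)
      filter_upwards [Filter.eventually_ge_atTop (0:ℝ)] with t ht
      exact Real.mul_self_sqrt ht
    have := hlog.add hsq
    apply this.congr' ?_ (Filter.EventuallyEq.refl _ _)
    filter_upwards with t
    ring
  have h2 := h1.def ha
  filter_upwards [h2, Filter.eventually_ge_atTop (1:ℝ)] with t hb ht1
  have hlt : 0 ≤ Real.log t := Real.log_nonneg ht1
  have hst : 0 ≤ Real.sqrt t := Real.sqrt_nonneg t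
  have habs : |1 + Real.sqrt t| * |Real.log t| ≤ (Real.log 4 - 1)/4 * |t| := by
    simpa [Real.norm_eq_abs] using hb
  rw [abs_of_nonneg (by positivity), abs_of_nonneg hlt, abs_of_nonneg (by linarith)] at habs
  exact habs

lemma primorial_log_lb :
    ∀ᶠ x : ℕ in Filter.atTop, (x:ℝ)/2 ≤ Real.log (primorial x) := by
  have hlog4 : (1.38:ℝ) < Real.log 4 := by
    have := Real.log_two_gt_d9
    have h42 : Real.log 4 = 2 * Real.log 2 := by
      rw [show (4:ℝ) = 2^2 by norm_num, Real.log_pow]; push_cast; ring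
    rw [h42]; linarith
  have hcast := (tendsto_natCast_atTop_atTop (R := ℝ))
  have hev1 := hcast.eventually sqrt_log_littleO
  have hev2 := hcast.eventually_ge_atTop (100:ℝ)
  filter_upwards [hev1, hev2, Filter.eventually_ge_atTop 8] with x hsl hx100 hx8
  have hx0 : (0:ℝ) < (x:ℝ) := by linarith
  have hP0 : (0:ℝ) < (primorial x : ℝ) := by exact_mod_cast primorial_pos x
  have hxpow0 : (0:ℝ) < ((x:ℝ)) ^ (Nat.sqrt x) := by positivity
  -- log of the nat inequality
  have hN := nat_ineq hx8
  have hNR : (4:ℝ) ^ (x/2 : ℕ) ≤ (x:ℝ) * ((x:ℝ) ^ (Nat.sqrt x) * (primorial x : ℝ)) := by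
    exact_mod_cast hN
  have hlogN : ((x/2 : ℕ):ℝ) * Real.log 4
      ≤ Real.log x + (Nat.sqrt x : ℝ) * Real.log x + Real.log (primorial x) := by
    have h1 : Real.log ((4:ℝ) ^ (x/2 : ℕ)) ≤
        Real.log ((x:ℝ) * ((x:ℝ) ^ (Nat.sqrt x) * (primorial x : ℝ))) :=
      Real.log_le_log (by positivity) hNR
    rw [Real.log_pow, Real.log_mul hx0.ne' (by positivity), Real.log_mul hxpow0.ne' hP0.ne',
      Real.log_pow] at h1
    linarith [h1]
  have hhalf : ((x:ℝ) - 1)/2 ≤ ((x/2 : ℕ):ℝ) := by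
    have : x ≤ 2*(x/2) + 1 := by omega
    have hc : (x:ℝ) ≤ 2*((x/2:ℕ):ℝ) + 1 := by exact_mod_cast this
    linarith
  have hsqrt : (Nat.sqrt x : ℝ) ≤ Real.sqrt x := by
    apply Real.le_sqrt_of_sq_le
    have hs : Nat.sqrt x * Nat.sqrt x ≤ x := Nat.sqrt_le x
    have : ((Nat.sqrt x * Nat.sqrt x : ℕ):ℝ) ≤ (x:ℝ) := by exact_mod_cast hs
    push_cast at this; nlinarith [this]
  have hlogx0 : 0 ≤ Real.log x := Real.log_nonneg (by linarith)
  have key : ((x:ℝ)-1)/2 * Real.log 4 - (1 + Real.sqrt x) * Real.log x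
      ≤ Real.log (primorial x) := by
    have h2 : (Nat.sqrt x : ℝ) * Real.log x ≤ Real.sqrt x * Real.log x :=
      mul_le_mul_of_nonneg_right hsqrt hlogx0
    have h3 : ((x:ℝ)-1)/2 * Real.log 4 ≤ ((x/2:ℕ):ℝ) * Real.log 4 :=
      mul_le_mul_of_nonneg_right hhalf (by linarith)
    nlinarith [hlogN, h2, h3]
  have hfin : (x:ℝ)/2 ≤ ((x:ℝ)-1)/2 * Real.log 4 - (1 + Real.sqrt x) * Real.log x := by
    have := hsl
    nlinarith [hlog4, hx100]
  linarith




lemma phiStar_five : phiStar 5 = 4 := by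
  have h5 : Nat.Prime 5 := by norm_num
  simp [phiStar, h5.primeFactors, h5.factorization]

lemma extremal (x : ℕ) (hx : 2 ≤ x) :
    ((primorial x)^5).primeFactors = (Finset.range (x+1)).filter Nat.Prime ∧
    ∀ q ∈ (Finset.range (x+1)).filter Nat.Prime, ((primorial x)^5).factorization q = 5 := by
  set Q := (Finset.range (x+1)).filter Nat.Prime with hQ
  have hQp : ∀ p ∈ Q, Nat.Prime p := fun p hp => (Finset.mem_filter.1 hp).2
  have hm : (primorial x)^5 = ∏ p ∈ Q, p^5 := by
    rw [primorial, ← Finset.prod_pow]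
  have hne : ∀ p ∈ Q, p^5 ≠ 0 := fun p hp => pow_ne_zero _ (hQp p hp).pos.ne'
  have hfact : ∀ q, ((primorial x)^5).factorization q = if q ∈ Q then 5 else 0 := by
    intro q
    rw [hm, Nat.factorization_prod hne]
    rw [Finset.sum_apply']
    have : ∀ p ∈ Q, (p^5).factorization q = if p = q then 5 else 0 := by
      intro p hp
      rw [(hQp p hp).factorization_pow, Finsupp.single_apply]
    rw [Finset.sum_congr rfl this, Finset.sum_ite_eq' Q q (fun _ => 5)]
  constructor
  · ext q
    rw [← Nat.support_factorization, Finsupp.mem_support_iff, hfact]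
    by_cases hq : q ∈ Q <;> simp [hq]
  · intro q hq
    rw [hfact, if_pos hq]

lemma lower_eventually :
    ∀ᶠ x : ℕ in Filter.atTop,
      Real.log 4 / 5 ≤ Real.log ((phiEStar ((primorial x)^5) : ℕ) : ℝ)
        * Real.log (Real.log (((primorial x)^5 : ℕ) : ℝ)) / Real.log (((primorial x)^5 : ℕ) : ℝ) := by
  have hcast := (tendsto_natCast_atTop_atTop (R := ℝ))
  filter_upwards [primorial_log_lb, Filter.eventually_ge_atTop 100] with x hθlb hx100
  set Q := (Finset.range (x+1)).filter Nat.Prime with hQ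
  set P := Q.card with hP
  set θ := Real.log (primorial x) with hθ
  have hx0 : (0:ℝ) < (x:ℝ) := by exact_mod_cast (by omega : 0 < x)
  have hx1 : (1:ℝ) < (x:ℝ) := by exact_mod_cast (by omega : 1 < x)
  have hθ0 : (0:ℝ) < θ := by
    have : (100:ℝ) ≤ (x:ℝ) := by exact_mod_cast hx100
    calc (0:ℝ) < (x:ℝ)/2 := by linarith
      _ ≤ θ := hθlb
  have hlogx0 : (0:ℝ) < Real.log x := Real.log_pos hx1
  obtain ⟨hpf, hfq⟩ := extremal x (by omega)
  -- phiEStar value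
  have hphi : phiEStar ((primorial x)^5) = 4 ^ P := by
    rw [phiEStar, hpf]
    rw [Finset.prod_congr rfl (fun q hq => by rw [hfq q hq, phiStar_five])]
    rw [Finset.prod_const]
  -- log m
  have hm0 : (0:ℝ) < ((primorial x : ℕ):ℝ) := by exact_mod_cast primorial_pos x
  have hlogm : Real.log (((primorial x)^5 : ℕ) : ℝ) = 5 * θ := by
    push_cast
    rw [Real.log_pow]
    push_cast
    ring
  have hlogphi : Real.log ((phiEStar ((primorial x)^5) : ℕ) : ℝ) = (P:ℝ) * Real.log 4 := by
    rw [hphi]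
    push_cast
    rw [Real.log_pow]
  -- θ ≤ P log x
  have hθP : θ ≤ (P:ℝ) * Real.log x := by
    have h1 : ((primorial x : ℕ):ℝ) = ∏ p ∈ Q, (p:ℝ) := by
      rw [primorial]
      push_cast
      rfl
    have h2 : θ = ∑ p ∈ Q, Real.log (p:ℝ) := by
      rw [hθ, h1, Real.log_prod]
      intro p hp
      have := (Finset.mem_filter.1 hp).2.pos
      positivity
    rw [h2]
    have h3 : ∀ p ∈ Q, Real.log (p:ℝ) ≤ Real.log (x:ℝ) := by
      intro p hp
      apply Real.log_le_log (by exact_mod_cast (Finset.mem_filter.1 hp).2.pos)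
      exact_mod_cast Nat.lt_succ_iff.1 (Finset.mem_range.1 (Finset.mem_filter.1 hp).1)
    calc ∑ p ∈ Q, Real.log (p:ℝ) ≤ Q.card • Real.log (x:ℝ) := Finset.sum_le_card_nsmul _ _ _ h3
      _ = (P:ℝ) * Real.log x := by rw [nsmul_eq_mul]
  have hlog5θ : Real.log (x:ℝ) ≤ Real.log (5*θ) := by
    apply Real.log_le_log hx0
    have : (100:ℝ) ≤ (x:ℝ) := by exact_mod_cast hx100
    linarith [hθlb]
  have hlog5θ0 : 0 < Real.log (5*θ) := lt_of_lt_of_le hlogx0 hlog5θ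
  have hPlb : θ/Real.log x ≤ (P:ℝ) := by
    rw [div_le_iff₀ hlogx0]
    linarith [hθP]
  have hlog40 : 0 < Real.log 4 := Real.log_pos (by norm_num)
  rw [hlogphi, hlogm]
  have hre : Real.log (5 * θ) = Real.log (5*θ) := rfl
  have heq : ((θ/Real.log x)*Real.log 4) * Real.log (5*θ)/(5*θ)
      = (Real.log 4/5) * (Real.log (5*θ)/Real.log x) := by
    field_simp
  calc Real.log 4/5 = (Real.log 4/5) * 1 := (mul_one _).symm
    _ ≤ (Real.log 4/5)*(Real.log (5*θ)/Real.log x) := by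
        apply mul_le_mul_of_nonneg_left _ (by positivity)
        rw [le_div_iff₀ hlogx0]
        linarith
    _ = ((θ/Real.log x)*Real.log 4) * Real.log (5*θ)/(5*θ) := heq.symm
    _ ≤ ((P:ℝ)*Real.log 4) * Real.log (5*θ)/(5*θ) := by
        gcongr


end Aux

/-- The maximal order of `φ^{(e)*}`:
`limsup (log φ^{(e)*}(n) · log log n) / log n = (log 4)/5`. -/
theorem phiEStar_limsup :
    Filter.limsup
      (fun n : ℕ => Real.log (phiEStar n) * Real.log (Real.log n) / Real.log n)
      Filter.atTop = Real.log 4 / 5 := by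
  set f : ℕ → ℝ := fun n : ℕ => Real.log (phiEStar n) * Real.log (Real.log n) / Real.log n
    with hfdef
  have hub : ∀ ε : ℝ, 0 < ε → ∀ᶠ n : ℕ in Filter.atTop, f n ≤ Real.log 4 / 5 + ε :=
    fun ε hε => upper_eventually ε hε
  have hfreq : ∃ᶠ n : ℕ in Filter.atTop, Real.log 4 / 5 ≤ f n := by
    rw [Filter.frequently_atTop]
    intro N
    obtain ⟨x₀, hx₀⟩ := Filter.eventually_atTop.1 lower_eventually
    obtain ⟨q, hqge, hq⟩ := Nat.exists_infinite_primes (max N x₀)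
    refine ⟨(primorial q)^5, ?_, hx₀ q (le_trans (le_max_right _ _) hqge)⟩
    have h1 : q ≤ primorial q := by
      apply Nat.le_of_dvd (primorial_pos q)
      apply Finset.dvd_prod_of_mem
      exact Finset.mem_filter.2 ⟨Finset.mem_range.2 (by omega), hq⟩
    calc N ≤ max N x₀ := le_max_left _ _
      _ ≤ q := hqge
      _ ≤ primorial q := h1
      _ ≤ (primorial q)^5 := Nat.le_self_pow (by norm_num) _
  have hbdd : Filter.IsBoundedUnder (· ≤ ·) Filter.atTop f :=
    Filter.isBoundedUnder_of_eventually_le (a := Real.log 4 / 5 + 1) (hub 1 one_pos)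
  have hcob : Filter.IsCoboundedUnder (· ≤ ·) Filter.atTop f :=
    Filter.IsCoboundedUnder.of_frequently_ge hfreq
  apply le_antisymm
  · apply le_of_forall_pos_le_add
    intro ε hε
    exact Filter.limsup_le_of_le hcob (hub ε hε)
  · exact Filter.le_limsup_of_frequently_le hfreq hbdd
end

section
/- There exists an arithmetic function w whose Dirichlet series W(s) = Σ_{n≥1} w(n)/n^s converges absolutely for Re s > 1/4, such that for all s with Re s > 1, Σ_{n=1}^∞ μ^{(e)*}(n)/n^s = ζ(s)/ζ(2s)² · W(s). -/
open scoped Classical BigOperators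

-- ===== auxiliary development =====

/-- coefficients of `1/(1+x-x^2-x^3)` -/
def czf : ℤ → ℤ := fun j => if j < 0 then 0 else if j % 2 = 0 then j / 2 + 1 else -(j / 2 + 1)

def uf : ℕ → ℤ := fun b => (-1) ^ omega b

def vf : ℕ → ℤ := fun a => ∑ b ∈ Finset.range (a+1), uf b * czf ((a : ℤ) - b)

lemma czf_neg {j : ℤ} (h : j < 0) : czf j = 0 := by simp [czf, h]

lemma czf_rec {j : ℤ} (h : 0 ≤ j) : czf (j+3) + czf (j+2) - czf (j+1) - czf j = 0 := by
  unfold czf; split_ifs <;> omega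

lemma czf_abs_le {j : ℤ} (h : 0 ≤ j) : |czf j| ≤ j + 1 := by
  unfold czf; split_ifs <;> [skip; skip; skip] <;> rw [abs_le] <;> constructor <;> omega

lemma omega_zero : omega 0 = 0 := by simp [omega]
lemma omega_one : omega 1 = 0 := by simp [omega]
lemma omega_two : omega 2 = 1 := by
  rw [omega, Nat.Prime.primeFactors Nat.prime_two, Finset.card_singleton]
lemma omega_three : omega 3 = 1 := by
  rw [omega, Nat.Prime.primeFactors Nat.prime_three, Finset.card_singleton]

lemma uf_zero : uf 0 = 1 := by simp [uf, omega_zero]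
lemma uf_one : uf 1 = 1 := by simp [uf, omega_one]
lemma uf_two : uf 2 = -1 := by simp [uf, omega_two]
lemma uf_three : uf 3 = -1 := by simp [uf, omega_three]

lemma vf_zero : vf 0 = 1 := by simp [vf, uf_zero]; norm_num [czf]
lemma vf_one : vf 1 = 0 := by
  simp [vf, Finset.sum_range_succ, uf_zero, uf_one]; norm_num [czf]
lemma vf_two : vf 2 = 0 := by
  simp [vf, Finset.sum_range_succ, uf_zero, uf_one, uf_two]; norm_num [czf]
lemma vf_three : vf 3 = 0 := by
  simp [vf, Finset.sum_range_succ, uf_zero, uf_one, uf_two, uf_three]; norm_num [czf]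

-- extend the range of summation
lemma vf_eq_sum {a m : ℕ} (h : a + 1 ≤ m) :
    vf a = ∑ b ∈ Finset.range m, uf b * czf ((a : ℤ) - b) := by
  rw [vf]
  refine Finset.sum_subset (Finset.range_subset_range.2 h) (fun b hb hnb => ?_)
  have hb' : a + 1 ≤ b := by simpa using hnb
  rw [czf_neg (by push_cast; omega), mul_zero]

lemma vf_rec (a : ℕ) : vf (a+3) + vf (a+2) - vf (a+1) - vf a = uf (a+3) := by
  rw [vf_eq_sum (show a + 3 + 1 ≤ a + 4 by omega),
    vf_eq_sum (show a + 2 + 1 ≤ a + 4 by omega),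
    vf_eq_sum (show a + 1 + 1 ≤ a + 4 by omega),
    vf_eq_sum (show a + 1 ≤ a + 4 by omega), ← Finset.sum_add_distrib,
    ← Finset.sum_sub_distrib, ← Finset.sum_sub_distrib]
  push_cast
  have key : ∀ b ∈ Finset.range (a+4),
      (uf b * czf ((a:ℤ)+3 - b) + uf b * czf ((a:ℤ)+2 - b) - uf b * czf ((a:ℤ)+1 - b)
        - uf b * czf ((a:ℤ) - b)) = if b = a + 3 then uf b else 0 := by
    intro b hb
    rw [Finset.mem_range] at hb
    rcases (show b ≤ a ∨ b = a + 1 ∨ b = a + 2 ∨ b = a + 3 by omega) with h | h | h | h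
    · have h0 : (0:ℤ) ≤ (a:ℤ) - b := by push_cast; omega
      have := czf_rec h0
      rw [if_neg (by omega)]
      have e3 : (a:ℤ)+3-b = ((a:ℤ)-b)+3 := by ring
      have e2 : (a:ℤ)+2-b = ((a:ℤ)-b)+2 := by ring
      have e1 : (a:ℤ)+1-b = ((a:ℤ)-b)+1 := by ring
      rw [e3, e2, e1, ← mul_add, ← mul_sub, ← mul_sub]
      rw [show czf (((a:ℤ)-b)+3) + czf (((a:ℤ)-b)+2) - czf (((a:ℤ)-b)+1) - czf ((a:ℤ)-b)
        = 0 from this, mul_zero]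
    · subst h
      rw [if_neg (by omega)]
      push_cast
      have e3 : (a:ℤ)+3-(a+1) = 2 := by ring
      have e2 : (a:ℤ)+2-(a+1) = 1 := by ring
      have e1 : (a:ℤ)+1-(a+1) = 0 := by ring
      have e0 : (a:ℤ)-(a+1) = -1 := by ring
      rw [e3, e2, e1, e0]
      norm_num [czf]
      ring
    · subst h
      rw [if_neg (by omega)]
      push_cast
      have e3 : (a:ℤ)+3-(a+2) = 1 := by ring
      have e2 : (a:ℤ)+2-(a+2) = 0 := by ring
      have e1 : (a:ℤ)+1-(a+2) = -1 := by ring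
      have e0 : (a:ℤ)-(a+2) = -2 := by ring
      rw [e3, e2, e1, e0]
      norm_num [czf]
    · subst h
      rw [if_pos rfl]
      push_cast
      have e3 : (a:ℤ)+3-(a+3) = 0 := by ring
      have e2 : (a:ℤ)+2-(a+3) = -1 := by ring
      have e1 : (a:ℤ)+1-(a+3) = -2 := by ring
      have e0 : (a:ℤ)-(a+3) = -3 := by ring
      rw [e3, e2, e1, e0]
      norm_num [czf]
  rw [Finset.sum_congr rfl key, Finset.sum_ite_eq' (Finset.range (a+4)) (a+3) uf,
    if_pos (by simp)]

lemma uf_abs (b : ℕ) : |uf b| = 1 := by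
  rw [uf, abs_pow, abs_neg, abs_one, one_pow]

lemma vf_abs_le (a : ℕ) : |vf a| ≤ ((a:ℤ) + 1)^2 := by
  calc |vf a| ≤ ∑ b ∈ Finset.range (a+1), |uf b * czf ((a:ℤ) - b)| :=
        Finset.abs_sum_le_sum_abs _ _
    _ ≤ ∑ _b ∈ Finset.range (a+1), ((a:ℤ) + 1) := by
        refine Finset.sum_le_sum (fun b hb => ?_)
        rw [Finset.mem_range] at hb
        rw [abs_mul, uf_abs, one_mul]
        calc |czf ((a:ℤ) - b)| ≤ ((a:ℤ) - b) + 1 := czf_abs_le (by push_cast; omega)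
          _ ≤ (a:ℤ) + 1 := by omega
    _ = ((a:ℤ) + 1)^2 := by
        rw [Finset.sum_const, Finset.card_range]; push_cast; ring

lemma norm_uf (b : ℕ) : ‖(uf b : ℂ)‖ = 1 := by
  rw [Complex.norm_intCast]
  exact_mod_cast congrArg (Int.cast : ℤ → ℝ) (uf_abs b)

lemma norm_vf_le (a : ℕ) : ‖(vf a : ℂ)‖ ≤ ((a:ℝ) + 1)^2 := by
  rw [Complex.norm_intCast, ← Int.cast_abs]
  calc ((|vf a| : ℤ) : ℝ) ≤ ((((a:ℤ)+1)^2 : ℤ) : ℝ) := by exact_mod_cast vf_abs_le a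
    _ = ((a:ℝ)+1)^2 := by push_cast; ring

lemma summable_sq_geom {r : ℝ} (h0 : 0 ≤ r) (h1 : r < 1) :
    Summable (fun a : ℕ => ((a:ℝ)+1)^2 * r^a) := by
  have hr : ‖r‖ < 1 := by rwa [Real.norm_eq_abs, abs_of_nonneg h0]
  have h2 : Summable (fun n : ℕ => (n:ℝ)^2 * r^n) :=
    summable_pow_mul_geometric_of_norm_lt_one 2 hr
  have hone : Summable (fun n : ℕ => (n:ℝ)^1 * r^n) :=
    summable_pow_mul_geometric_of_norm_lt_one 1 hr
  have h0' : Summable (fun n : ℕ => r^n) := summable_geometric_of_lt_one h0 h1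
  have := (h2.add (hone.mul_left 2)).add h0'
  refine this.congr (fun n => ?_)
  push_cast; ring

lemma summable_norm_vf_mul {x : ℂ} (hx : ‖x‖ < 1) :
    Summable (fun a : ℕ => ‖(vf a : ℂ) * x^a‖) := by
  refine Summable.of_nonneg_of_le (fun a => norm_nonneg _) (fun a => ?_)
    (summable_sq_geom (norm_nonneg x) hx)
  rw [norm_mul, norm_pow]
  exact mul_le_mul_of_nonneg_right (norm_vf_le a) (by positivity)

lemma summable_norm_uf_mul {x : ℂ} (hx : ‖x‖ < 1) :
    Summable (fun a : ℕ => ‖(uf a : ℂ) * x^a‖) := by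
  refine Summable.of_nonneg_of_le (fun a => norm_nonneg _) (fun a => ?_)
    (summable_geometric_of_lt_one (norm_nonneg x) hx)
  rw [norm_mul, norm_pow, norm_uf, one_mul]

lemma local_identity {x : ℂ} (hx : ‖x‖ < 1) :
    (∑' a : ℕ, (uf a : ℂ) * x^a) = (1 + x - x^2 - x^3) * ∑' a : ℕ, (vf a : ℂ) * x^a := by
  have hV : HasSum (fun a : ℕ => (vf a : ℂ) * x^a) (∑' a : ℕ, (vf a : ℂ) * x^a) :=
    (summable_norm_vf_mul hx).of_norm.hasSum
  set V := ∑' a : ℕ, (vf a : ℂ) * x^a with hVdef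
  -- shifted series
  let g : ℕ → ℕ → ℂ := fun k a => if h : k ≤ a then (vf (a - k) : ℂ) * x^a else 0
  have hg : ∀ k : ℕ, HasSum (g k) (x^k * V) := by
    intro k
    have h1 : HasSum (fun a : ℕ => g k (a + k)) (x^k * V) := by
      have : (fun a : ℕ => g k (a + k)) = fun a : ℕ => x^k * ((vf a : ℂ) * x^a) := by
        funext a
        simp only [g, dif_pos (Nat.le_add_left k a), Nat.add_sub_cancel]
        ring
      rw [this]
      exact hV.mul_left _
    have h2 := (hasSum_nat_add_iff (f := g k) k).mp h1
    have h3 : ∑ i ∈ Finset.range k, g k i = 0 := by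
      refine Finset.sum_eq_zero (fun i hi => ?_)
      rw [Finset.mem_range] at hi
      simp only [g]
      exact dif_neg (by omega)
    rwa [h3, add_zero] at h2
  have hcomb : HasSum (fun a : ℕ => g 0 a + g 1 a - g 2 a - g 3 a)
      (x^0 * V + x^1 * V - x^2 * V - x^3 * V) := (((hg 0).add (hg 1)).sub (hg 2)).sub (hg 3)
  have hpt : ∀ a : ℕ, g 0 a + g 1 a - g 2 a - g 3 a = (uf a : ℂ) * x^a := by
    intro a
    match a with
    | 0 => simp [g, vf_zero, uf_zero]
    | 1 =>
        simp only [g]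
        norm_num [vf_zero, vf_one, uf_one]
    | 2 =>
        simp only [g]
        norm_num [vf_zero, vf_one, vf_two, uf_two]
    | (n+3) =>
        have h0 : (0:ℕ) ≤ n + 3 := by omega
        simp only [g, dif_pos (show 0 ≤ n+3 by omega), dif_pos (show 1 ≤ n+3 by omega),
          dif_pos (show 2 ≤ n+3 by omega), dif_pos (show 3 ≤ n+3 by omega)]
        have e1 : n + 3 - 1 = n + 2 := rfl
        have e2 : n + 3 - 2 = n + 1 := rfl
        have e3 : n + 3 - 3 = n := rfl
        rw [e1, e2, e3, Nat.sub_zero]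
        have := vf_rec n
        have : ((vf (n+3) + vf (n+2) - vf (n+1) - vf n : ℤ) : ℂ) = ((uf (n+3) : ℤ) : ℂ) := by
          exact_mod_cast congrArg (Int.cast : ℤ → ℂ) this
        push_cast at this
        linear_combination x^(n+3) * this
  have hU : HasSum (fun a : ℕ => (uf a : ℂ) * x^a) (x^0 * V + x^1 * V - x^2 * V - x^3 * V) := by
    rwa [funext hpt] at hcomb
  rw [hU.tsum_eq]
  ring

-- generic multiplicativity over prime factorizations
lemma prod_primeFactors_mul {M : Type*} [CommMonoid M] (g : ℕ → ℕ → M) {m n : ℕ}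
    (hm : m ≠ 0) (hn : n ≠ 0) (h : Nat.Coprime m n) :
    ∏ p ∈ (m*n).primeFactors, g p ((m*n).factorization p)
      = (∏ p ∈ m.primeFactors, g p (m.factorization p)) *
        ∏ p ∈ n.primeFactors, g p (n.factorization p) := by
  rw [Nat.primeFactors_mul hm hn, Finset.prod_union h.disjoint_primeFactors]
  congr 1
  · refine Finset.prod_congr rfl (fun p hp => ?_)
    have hpn : p ∉ n.primeFactors := Finset.disjoint_left.mp h.disjoint_primeFactors hp
    have hzn : n.factorization p = 0 := by
      rwa [← Finsupp.notMem_support_iff, Nat.support_factorization]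
    rw [Nat.factorization_mul hm hn, Finsupp.add_apply, hzn, add_zero]
  · refine Finset.prod_congr rfl (fun p hp => ?_)
    have hpm : p ∉ m.primeFactors := Finset.disjoint_right.mp h.disjoint_primeFactors hp
    have hzm : m.factorization p = 0 := by
      rwa [← Finsupp.notMem_support_iff, Nat.support_factorization]
    rw [Nat.factorization_mul hm hn, Finsupp.add_apply, hzm, zero_add]

lemma prod_primeFactors_prime_pow {M : Type*} [CommMonoid M] (g : ℕ → ℕ → M)
    {p : ℕ} (hp : p.Prime) {e : ℕ} (he : e ≠ 0) :
    ∏ q ∈ (p^e).primeFactors, g q ((p^e).factorization q) = g p e := by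
  rw [Nat.primeFactors_pow p he, hp.primeFactors, Finset.prod_singleton,
    hp.factorization_pow, Finsupp.single_eq_same]

-- summability from local data
lemma summable_of_prime_local (f : ℕ → ℝ) (h0 : f 0 = 0) (h1 : f 1 = 1)
    (hnn : ∀ n, 0 ≤ f n)
    (hmul : ∀ {m n : ℕ}, Nat.Coprime m n → f (m * n) = f m * f n)
    (hloc : ∀ {p : ℕ}, p.Prime → Summable (fun e : ℕ => f (p ^ e)))
    (C : ℝ)
    (hC : ∀ s : Finset ℕ, ∑ p ∈ s.filter Nat.Prime, (∑' e : ℕ, f (p ^ (e+1))) ≤ C) :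
    Summable f := by
  refine summable_of_sum_le (c := Real.exp C) (fun n => hnn n) (fun u => ?_)
  set s := u.biUnion Nat.primeFactors with hs
  obtain ⟨hsummable, hhs⟩ :=
    EulerProduct.summable_and_hasSum_factoredNumbers_prod_filter_prime_tsum h1
      (fun {m n} hc => hmul hc)
      (fun {p} hp => by
        simpa [Real.norm_eq_abs, abs_of_nonneg (hnn _)] using hloc hp) s
  have key1 : ∑ n ∈ u, f n ≤ ∏ p ∈ s.filter Nat.Prime, ∑' e : ℕ, f (p^e) := by
    rw [← hhs.tsum_eq]
    have hind : Summable (Set.indicator (Nat.factoredNumbers s) f) := by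
      rw [← summable_subtype_iff_indicator]
      exact Summable.of_norm (by
        simpa [Real.norm_eq_abs, abs_of_nonneg (hnn _)] using hsummable)
    calc ∑ n ∈ u, f n = ∑ n ∈ u, Set.indicator (Nat.factoredNumbers s) f n := by
          refine Finset.sum_congr rfl (fun n hn => ?_)
          by_cases hn0 : n = 0
          · subst hn0
            rw [Set.indicator_of_notMem (fun hmem => (Nat.mem_factoredNumbers.mp hmem).1 rfl), h0]
          · have hmem : n ∈ Nat.factoredNumbers s := by
              refine Nat.mem_factoredNumbers.mpr ⟨hn0, fun p hp => ?_⟩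
              exact Finset.mem_biUnion.mpr ⟨n, hn, Nat.mem_primeFactors.mpr
                ⟨Nat.prime_of_mem_primeFactorsList hp, Nat.dvd_of_mem_primeFactorsList hp, hn0⟩⟩
            rw [Set.indicator_of_mem hmem]
      _ ≤ ∑' n : ℕ, Set.indicator (Nat.factoredNumbers s) f n :=
          Summable.sum_le_tsum u (fun i _ => Set.indicator_nonneg (fun j _ => hnn j) i) hind
      _ = ∑' m : Nat.factoredNumbers s, f m := (tsum_subtype _ f).symm
  have key2 : ∏ p ∈ s.filter Nat.Prime, (∑' e : ℕ, f (p^e)) ≤ Real.exp C := by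
    have hstep : ∀ p ∈ s.filter Nat.Prime,
        (∑' e : ℕ, f (p^e)) ≤ Real.exp (∑' e : ℕ, f (p^(e+1))) := by
      intro p hp
      have hpp : p.Prime := (Finset.mem_filter.mp hp).2
      have := Summable.tsum_eq_zero_add (hloc hpp)
      rw [pow_zero, h1] at this
      rw [this]
      have := Real.add_one_le_exp (∑' e : ℕ, f (p^(e+1)))
      linarith
    calc ∏ p ∈ s.filter Nat.Prime, (∑' e : ℕ, f (p^e))
        ≤ ∏ p ∈ s.filter Nat.Prime, Real.exp (∑' e : ℕ, f (p^(e+1))) :=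
          Finset.prod_le_prod (fun p _ => tsum_nonneg (fun e => hnn _)) hstep
      _ = Real.exp (∑ p ∈ s.filter Nat.Prime, ∑' e : ℕ, f (p^(e+1))) :=
          (Real.exp_sum _ _).symm
      _ ≤ Real.exp C := Real.exp_le_exp.mpr (hC s)
  exact key1.trans key2

-- ===== the coefficient function w =====

noncomputable def wf : ℕ → ℂ :=
  fun n => if n = 0 then 0 else ∏ p ∈ n.primeFactors, (vf (n.factorization p) : ℂ)

lemma wf_zero : wf 0 = 0 := by simp [wf]

lemma wf_one : wf 1 = 1 := by simp [wf]

lemma wf_prime_pow {p : ℕ} (hp : p.Prime) (e : ℕ) : wf (p^e) = (vf e : ℂ) := by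
  rcases Nat.eq_zero_or_pos e with he | he
  · subst he; rw [pow_zero, wf_one, vf_zero]; norm_num
  · rw [wf, if_neg (pow_ne_zero e hp.pos.ne')]
    exact prod_primeFactors_prime_pow (fun _ k => (vf k : ℂ)) hp he.ne'

lemma wf_mul {m n : ℕ} (hm : m ≠ 0) (hn : n ≠ 0) (h : Nat.Coprime m n) :
    wf (m * n) = wf m * wf n := by
  rw [wf, wf, wf, if_neg (mul_ne_zero hm hn), if_neg hm, if_neg hn]
  exact prod_primeFactors_mul (fun _ k => (vf k : ℂ)) hm hn h

-- ===== summability for Re s > 1/4 =====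

lemma norm_nat_cpow_neg {n : ℕ} (hn : n ≠ 0) (s : ℂ) :
    ‖(n : ℂ) ^ (-s)‖ = (n : ℝ) ^ (-s.re) := by
  rw [show ((n : ℕ) : ℂ) = (((n : ℝ)) : ℂ) from by push_cast; rfl,
    Complex.norm_cpow_eq_rpow_re_of_pos (by positivity), Complex.neg_re]

lemma summable_wf_norm {s : ℂ} (hs : 1 / 4 < s.re) :
    Summable (fun n : ℕ => ‖wf n / (n : ℂ) ^ s‖) := by
  have hσ : (0:ℝ) < s.re := by linarith
  have hs0 : s ≠ 0 := fun h => by rw [h] at hσ; simp at hσ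
  set Z := riemannZetaSummandHom hs0 with hZ
  have hZn : ∀ n : ℕ, Z n = (n : ℂ) ^ (-s) := fun n => rfl
  have hform : (fun n : ℕ => ‖wf n / (n : ℂ) ^ s‖) = fun n : ℕ => ‖wf n * Z n‖ := by
    funext n; rw [hZn, Complex.cpow_neg, div_eq_mul_inv]
  rw [hform]
  set f : ℕ → ℝ := fun n => ‖wf n * Z n‖ with hf
  -- local values
  have hfpe : ∀ {p : ℕ}, p.Prime → ∀ e : ℕ,
      f (p^e) = ‖(vf e : ℂ)‖ * ((p:ℝ) ^ (-s.re))^e := by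
    intro p hp e
    have : f (p^e) = ‖wf (p^e)‖ * ‖Z (p^e)‖ := by rw [hf]; simp [norm_mul]
    rw [this, wf_prime_pow hp e, map_pow, norm_pow, hZn,
      norm_nat_cpow_neg hp.pos.ne' s]
  -- basic bounds on the geometric ratio
  have hr0 : ∀ p : ℕ, (0:ℝ) ≤ (p:ℝ) ^ (-s.re) := fun p => Real.rpow_nonneg (Nat.cast_nonneg p) _
  have hr1 : ∀ {p : ℕ}, p.Prime → (p:ℝ) ^ (-s.re) < 1 := fun {p} hp =>
    Real.rpow_lt_one_of_one_lt_of_neg (by exact_mod_cast hp.one_lt) (by linarith)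
  have hrρ : ∀ {p : ℕ}, p.Prime → (p:ℝ) ^ (-s.re) ≤ (2:ℝ) ^ (-s.re) := by
    intro p hp
    rw [Real.rpow_neg (Nat.cast_nonneg p), Real.rpow_neg (by norm_num)]
    have h2p : (2:ℝ) ^ s.re ≤ (p:ℝ) ^ s.re :=
      Real.rpow_le_rpow (by norm_num) (by exact_mod_cast hp.two_le) hσ.le
    exact inv_anti₀ (Real.rpow_pos_of_pos two_pos s.re) h2p
  set ρ : ℝ := (2:ℝ) ^ (-s.re) with hρ
  have hρ0 : 0 ≤ ρ := Real.rpow_nonneg (by norm_num) _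
  have hρ1 : ρ < 1 := Real.rpow_lt_one_of_one_lt_of_neg (by norm_num) (by linarith)
  -- local summability
  have hloc : ∀ {p : ℕ}, p.Prime → Summable (fun e : ℕ => f (p^e)) := by
    intro p hp
    refine Summable.of_nonneg_of_le (fun e => norm_nonneg _) (fun e => ?_)
      (summable_sq_geom (hr0 p) (hr1 hp))
    rw [hfpe hp e]
    exact mul_le_mul_of_nonneg_right (norm_vf_le e) (pow_nonneg (hr0 p) e)
  -- the majorant constant
  have hpoly : Summable (fun e : ℕ => ((e:ℝ)+5)^2 * ρ^e) := by
    have hρ' : ‖ρ‖ < 1 := by rwa [Real.norm_eq_abs, abs_of_nonneg hρ0]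
    have h2 : Summable (fun n : ℕ => (n:ℝ)^2 * ρ^n) :=
      summable_pow_mul_geometric_of_norm_lt_one 2 hρ'
    have hone : Summable (fun n : ℕ => (n:ℝ)^1 * ρ^n) :=
      summable_pow_mul_geometric_of_norm_lt_one 1 hρ'
    have h0' : Summable (fun n : ℕ => ρ^n) := summable_geometric_of_lt_one hρ0 hρ1
    refine ((h2.add (hone.mul_left 10)).add (h0'.mul_left 25)).congr (fun n => ?_)
    push_cast; ring
  set K : ℝ := ∑' e : ℕ, ((e:ℝ)+5)^2 * ρ^e with hK
  have hK0 : 0 ≤ K := tsum_nonneg (fun e => by positivity)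
  have hg4 : Summable (fun n : ℕ => (n:ℝ) ^ (-(4 * s.re))) :=
    Real.summable_nat_rpow.mpr (by linarith)
  set R : ℝ := ∑' n : ℕ, (n:ℝ) ^ (-(4 * s.re)) with hR
  -- per-prime tail bound
  have hTp : ∀ {p : ℕ}, p.Prime → (∑' e : ℕ, f (p^(e+1))) ≤ K * (p:ℝ) ^ (-(4 * s.re)) := by
    intro p hp
    set r : ℝ := (p:ℝ) ^ (-s.re) with hrdef
    have hr4 : r ^ (4:ℕ) = (p:ℝ) ^ (-(4 * s.re)) := by
      rw [hrdef, ← Real.rpow_natCast ((p:ℝ) ^ (-s.re)) 4,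
        ← Real.rpow_mul (Nat.cast_nonneg p)]
      congr 1
      push_cast
      ring
    -- small exponents vanish
    have hvanish : ∀ i < 3, f (p^(i+1)) = 0 := by
      intro i hi
      interval_cases i
      · rw [hfpe hp 1, vf_one]; simp
      · rw [hfpe hp 2, vf_two]; simp
      · rw [hfpe hp 3, vf_three]; simp
    have hsum1 : Summable (fun e : ℕ => f (p^(e+1))) :=
      (summable_nat_add_iff (f := fun e : ℕ => f (p^e)) 1).mpr (hloc hp)
    have hshift := Summable.sum_add_tsum_nat_add (f := fun e : ℕ => f (p^(e+1))) 3 hsum1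
    have hzero : (∑ i ∈ Finset.range 3, f (p^(i+1))) = 0 :=
      Finset.sum_eq_zero (fun i hi => hvanish i (Finset.mem_range.mp hi))
    have heq : (∑' e : ℕ, f (p^(e+1))) = ∑' e : ℕ, f (p^(e+4)) := by
      rw [← hshift, hzero, zero_add]
    rw [heq]
    have hbound : ∀ e : ℕ, f (p^(e+4)) ≤ ((e:ℝ)+5)^2 * ρ^e * r^(4:ℕ) := by
      intro e
      rw [hfpe hp (e+4)]
      have h1 : ‖(vf (e+4) : ℂ)‖ ≤ ((e:ℝ)+5)^2 := by
        have := norm_vf_le (e+4)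
        calc ‖(vf (e+4) : ℂ)‖ ≤ (((e+4:ℕ):ℝ)+1)^2 := this
          _ = ((e:ℝ)+5)^2 := by push_cast; ring
      have h2 : r^(e+4) = r^e * r^(4:ℕ) := by rw [← pow_add]
      rw [h2, ← mul_assoc]
      refine mul_le_mul ?_ le_rfl (pow_nonneg (hr0 p) 4) (by positivity)
      calc ‖(vf (e+4) : ℂ)‖ * r^e ≤ ((e:ℝ)+5)^2 * r^e :=
            mul_le_mul_of_nonneg_right h1 (pow_nonneg (hr0 p) e)
        _ ≤ ((e:ℝ)+5)^2 * ρ^e := by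
            refine mul_le_mul_of_nonneg_left ?_ (by positivity)
            exact pow_le_pow_left₀ (hr0 p) (hrρ hp) e
    calc (∑' e : ℕ, f (p^(e+4)))
        ≤ ∑' e : ℕ, ((e:ℝ)+5)^2 * ρ^e * r^(4:ℕ) :=
          Summable.tsum_le_tsum hbound ((summable_nat_add_iff (f := fun e : ℕ => f (p^e)) 4).mpr (hloc hp)) (hpoly.mul_right _)
      _ = K * r^(4:ℕ) := by rw [tsum_mul_right]
      _ = K * (p:ℝ) ^ (-(4 * s.re)) := by rw [hr4]
  -- apply the general criterion
  refine summable_of_prime_local f ?_ ?_ (fun n => norm_nonneg _) ?_ hloc (K * R) ?_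
  · rw [hf]; simp [wf_zero]
  · rw [hf]; simp [wf_one]
  · intro m n hcop
    rcases Nat.eq_zero_or_pos m with hm | hm
    · subst hm
      have : n = 1 := by simpa using hcop
      subst this
      simp [hf, wf_zero]
    rcases Nat.eq_zero_or_pos n with hn | hn
    · subst hn
      have : m = 1 := by simpa using hcop.symm
      subst this
      simp [hf, wf_zero]
    · rw [hf]
      simp only
      rw [wf_mul hm.ne' hn.ne' hcop, map_mul, mul_mul_mul_comm, norm_mul]
  · intro t
    calc ∑ p ∈ t.filter Nat.Prime, (∑' e : ℕ, f (p^(e+1)))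
        ≤ ∑ p ∈ t.filter Nat.Prime, K * (p:ℝ) ^ (-(4 * s.re)) :=
          Finset.sum_le_sum (fun p hp => hTp (Finset.mem_filter.mp hp).2)
      _ = K * ∑ p ∈ t.filter Nat.Prime, (p:ℝ) ^ (-(4 * s.re)) := by rw [Finset.mul_sum]
      _ ≤ K * R := by
          refine mul_le_mul_of_nonneg_left ?_ hK0
          exact Summable.sum_le_tsum _ (fun i _ => Real.rpow_nonneg (Nat.cast_nonneg i) _) hg4

-- ===== the Dirichlet series identity for Re s > 1 =====

lemma muEStar_one : muEStar 1 = 1 := by simp [muEStar]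

lemma muEStar_eq_prod (n : ℕ) :
    muEStar n = ∏ p ∈ n.primeFactors, ((-1:ℤ) ^ (omega (n.factorization p))) := by
  rw [muEStar, Finset.prod_pow_eq_pow_sum]

lemma muEStar_prime_pow {p : ℕ} (hp : p.Prime) (e : ℕ) : muEStar (p^e) = uf e := by
  rcases Nat.eq_zero_or_pos e with he | he
  · subst he; rw [pow_zero, muEStar_one, uf_zero]
  · rw [muEStar_eq_prod, prod_primeFactors_prime_pow (fun _ k => ((-1:ℤ)^(omega k))) hp he.ne']
    rfl

lemma muEStar_mul {m n : ℕ} (hm : m ≠ 0) (hn : n ≠ 0) (h : Nat.Coprime m n) :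
    muEStar (m * n) = muEStar m * muEStar n := by
  rw [muEStar_eq_prod, muEStar_eq_prod, muEStar_eq_prod]
  exact prod_primeFactors_mul (fun _ k => ((-1:ℤ)^(omega k))) hm hn h

lemma muEStar_abs (n : ℕ) : |muEStar n| = 1 := by
  rw [muEStar, abs_pow, abs_neg, abs_one, one_pow]

lemma norm_muEStar (n : ℕ) : ‖(muEStar n : ℂ)‖ = 1 := by
  rw [Complex.norm_intCast]
  exact_mod_cast congrArg (Int.cast : ℤ → ℝ) (muEStar_abs n)

lemma dirichlet_identity {s : ℂ} (hs : 1 < s.re) :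
    ∑' n : ℕ, (muEStar n : ℂ) / (n : ℂ) ^ s =
      riemannZeta s / (riemannZeta (2 * s)) ^ 2 * ∑' n : ℕ, wf n / (n : ℂ) ^ s := by
  have hσ : (0:ℝ) < s.re := by linarith
  have hs0 : s ≠ 0 := fun h => by rw [h] at hσ; simp at hσ
  have hs14 : 1 / 4 < s.re := by linarith
  have hs2 : 1 < (2 * s).re := by
    have : (2 * s).re = 2 * s.re := by simp [Complex.mul_re]
    rw [this]; linarith
  set Z := riemannZetaSummandHom hs0 with hZdef
  have hZn : ∀ n : ℕ, Z n = (n : ℂ) ^ (-s) := fun n => rfl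
  set fμ : ℕ → ℂ := fun n => (muEStar n : ℂ) * Z n with hfμ
  set fw : ℕ → ℂ := fun n => wf n * Z n with hfw
  have hform_mu : (fun n : ℕ => (muEStar n : ℂ) / (n : ℂ) ^ s) = fμ := by
    funext n; rw [hfμ]; simp only; rw [hZn, Complex.cpow_neg, div_eq_mul_inv]
  have hform_w : (fun n : ℕ => wf n / (n : ℂ) ^ s) = fw := by
    funext n; rw [hfw]; simp only; rw [hZn, Complex.cpow_neg, div_eq_mul_inv]
  -- summability
  have hsum_w : Summable (fun n : ℕ => ‖fw n‖) := by
    have := summable_wf_norm hs14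
    rwa [show (fun n : ℕ => ‖wf n / (n:ℂ)^s‖) = fun n : ℕ => ‖fw n‖ from by rw [← hform_w]]
      at this
  have hsum_mu : Summable (fun n : ℕ => ‖fμ n‖) := by
    have h1 : (fun n : ℕ => ‖fμ n‖) = fun n : ℕ => ‖riemannZetaSummandHom hs0 n‖ := by
      funext n; rw [hfμ]; simp only [norm_mul, norm_muEStar, one_mul]; rfl
    rw [h1]
    exact summable_riemannZetaSummand hs
  -- multiplicativity hypotheses
  have hmul_mu : ∀ {m n : ℕ}, Nat.Coprime m n → fμ (m * n) = fμ m * fμ n := by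
    intro m n hcop
    rcases Nat.eq_zero_or_pos m with hm | hm
    · subst hm
      have : n = 1 := by simpa using hcop
      subst this
      simp [hfμ, muEStar_one]
    rcases Nat.eq_zero_or_pos n with hn | hn
    · subst hn
      have : m = 1 := by simpa using hcop.symm
      subst this
      simp [hfμ, muEStar_one]
    · rw [hfμ]; simp only
      rw [muEStar_mul hm.ne' hn.ne' hcop, map_mul]
      push_cast
      ring
  have hmul_w : ∀ {m n : ℕ}, Nat.Coprime m n → fw (m * n) = fw m * fw n := by
    intro m n hcop
    rcases Nat.eq_zero_or_pos m with hm | hm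
    · subst hm
      have : n = 1 := by simpa using hcop
      subst this
      simp [hfw, wf_zero]
    rcases Nat.eq_zero_or_pos n with hn | hn
    · subst hn
      have : m = 1 := by simpa using hcop.symm
      subst this
      simp [hfw, wf_zero]
    · rw [hfw]; simp only
      rw [wf_mul hm.ne' hn.ne' hcop, map_mul]
      ring
  -- Euler products
  have Hμ : HasProd (fun p : Nat.Primes => ∑' e : ℕ, fμ ((p:ℕ)^e)) (∑' n : ℕ, fμ n) :=
    EulerProduct.eulerProduct_hasProd (by simp [hfμ, muEStar_one]) hmul_mu hsum_mu
      (by simp [hfμ, map_zero])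
  have Hw : HasProd (fun p : Nat.Primes => ∑' e : ℕ, fw ((p:ℕ)^e)) (∑' n : ℕ, fw n) :=
    EulerProduct.eulerProduct_hasProd (by simp [hfw, wf_one]) hmul_w hsum_w
      (by simp [hfw, map_zero])
  have Hz := riemannZeta_eulerProduct_hasProd hs
  have Hy := riemannZeta_eulerProduct_hasProd hs2
  -- per-prime identity
  have hkey : ∀ p : Nat.Primes,
      (∑' e : ℕ, fμ ((p:ℕ)^e)) * ((1 - (p:ℂ)^(-(2*s)))⁻¹ * (1 - (p:ℂ)^(-(2*s)))⁻¹)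
        = (1 - (p:ℂ)^(-s))⁻¹ * ∑' e : ℕ, fw ((p:ℕ)^e) := by
    intro p
    have hp : (p:ℕ).Prime := p.prop
    set x : ℂ := ((p:ℕ) : ℂ) ^ (-s) with hxdef
    have hx : ‖x‖ < 1 := by
      rw [hxdef, norm_nat_cpow_neg hp.pos.ne' s]
      exact Real.rpow_lt_one_of_one_lt_of_neg (by exact_mod_cast hp.one_lt) (by linarith)
    have hxZ : Z (p:ℕ) = x := rfl
    have hfμe : (fun e : ℕ => fμ ((p:ℕ)^e)) = fun e : ℕ => (uf e : ℂ) * x^e := by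
      funext e
      rw [hfμ]; simp only
      rw [muEStar_prime_pow hp e, map_pow, hxZ]
    have hfwe : (fun e : ℕ => fw ((p:ℕ)^e)) = fun e : ℕ => (vf e : ℂ) * x^e := by
      funext e
      rw [hfw]; simp only
      rw [wf_prime_pow hp e, map_pow, hxZ]
    have hx2 : ((p:ℕ):ℂ)^(-(2*s)) = x^2 := by
      rw [hxdef, show -(2*s) = -s + -s by ring,
        Complex.cpow_add _ _ (by exact_mod_cast hp.pos.ne'), sq]
    have h1x : (1 : ℂ) - x ≠ 0 := by
      intro h
      have : x = 1 := by linear_combination -h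
      rw [this] at hx; simp at hx
    have h1x2 : (1 : ℂ) - x^2 ≠ 0 := by
      intro h
      have hx2' : ‖x^2‖ < 1 := by
        rw [norm_pow]
        exact pow_lt_one₀ (norm_nonneg x) hx (by norm_num)
      have : x^2 = 1 := by linear_combination -h
      rw [this] at hx2'; simp at hx2'
    rw [hfμe, hfwe, hx2, local_identity hx]
    field_simp
    ring
  -- combine
  have Hleft : HasProd
      (fun p : Nat.Primes => (∑' e : ℕ, fμ ((p:ℕ)^e)) *
        ((1 - (p:ℂ)^(-(2*s)))⁻¹ * (1 - (p:ℂ)^(-(2*s)))⁻¹))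
      ((∑' n : ℕ, fμ n) * (riemannZeta (2*s) * riemannZeta (2*s))) :=
    Hμ.mul (Hy.mul Hy)
  have Hright : HasProd
      (fun p : Nat.Primes => (1 - (p:ℂ)^(-s))⁻¹ * ∑' e : ℕ, fw ((p:ℕ)^e))
      (riemannZeta s * ∑' n : ℕ, fw n) := Hz.mul Hw
  have hEq : (∑' n : ℕ, fμ n) * (riemannZeta (2*s) * riemannZeta (2*s))
      = riemannZeta s * ∑' n : ℕ, fw n := by
    refine HasProd.unique ?_ Hright
    rwa [funext hkey] at Hleft
  have hz2 : riemannZeta (2*s) ≠ 0 := riemannZeta_ne_zero_of_one_lt_re hs2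
  rw [hform_mu, hform_w]
  rw [div_mul_eq_mul_div, eq_div_iff (pow_ne_zero 2 hz2)]
  linear_combination hEq

/-- The Dirichlet series of `μ^{(e)*}` is `ζ(s)/ζ(2s)² · W(s)` where `W` converges
absolutely for `Re s > 1/4`. -/
theorem muEStar_dirichlet_series :
    ∃ w : ℕ → ℂ,
      (∀ s : ℂ, 1 / 4 < s.re → Summable (fun n : ℕ => ‖w n / (n : ℂ) ^ s‖)) ∧
      ∀ s : ℂ, 1 < s.re →
        ∑' n : ℕ, (muEStar n : ℂ) / (n : ℂ) ^ s =
          riemannZeta s / (riemannZeta (2 * s)) ^ 2 * ∑' n : ℕ, w n / (n : ℂ) ^ s :=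
  ⟨wf, fun s hs => summable_wf_norm hs, fun s hs => dirichlet_identity hs⟩
end

section
/- For every positive integer n, Σ_{d e-unitary divisor of n} μ^{(e)*}(d) = μ(n)², where μ is the Möbius function; that is, the sum equals 1 if n is squarefree and 0 otherwise. (Equivalently, μ^{(e)*} is the inverse of the constant function 1 with respect to the exponential unitary convolution, whose identity element is μ².) -/
open scoped Classical BigOperators

section MuEStarProof

lemma fact_prod_pow {s : Finset ℕ} (hs : ∀ p ∈ s, Nat.Prime p) (e : ℕ → ℕ) (q : ℕ) :
    (∏ p ∈ s, p ^ e p).factorization q = if q ∈ s then e q else 0 := by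
  rw [Nat.factorization_prod (fun p hp => pow_ne_zero _ (hs p hp).pos.ne')]
  rw [Finsupp.finset_sum_apply]
  rw [Finset.sum_congr rfl (fun p hp => by
    rw [(hs p hp).factorization_pow, Finsupp.single_apply])]
  simp

lemma primeFactors_prod_pow {s : Finset ℕ} (hs : ∀ p ∈ s, Nat.Prime p) {e : ℕ → ℕ}
    (he : ∀ p ∈ s, 0 < e p) :
    (∏ p ∈ s, p ^ e p).primeFactors = s := by
  ext q
  rw [← Nat.support_factorization, Finsupp.mem_support_iff, fact_prod_pow hs]
  split_ifs with h
  · simp [h, (he q h).ne']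
  · simp [h]

lemma unitary_exponent {a b : ℕ} (ha : a ≠ 0) (hb : b ≠ 0) (h : IsUnitaryDivisor b a)
    {q : ℕ} (hq : q ∈ b.primeFactors) : b.factorization q = a.factorization q := by
  obtain ⟨hdvd, hgcd⟩ := h
  have hba : b.factorization q ≤ a.factorization q :=
    ((Nat.factorization_le_iff_dvd hb ha).mpr hdvd) q
  have hqb : b.factorization q ≠ 0 := by
    rwa [← Finsupp.mem_support_iff, Nat.support_factorization]
  have hdivnz : a / b ≠ 0 := (Nat.div_pos (Nat.le_of_dvd (Nat.pos_of_ne_zero ha) hdvd)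
    (Nat.pos_of_ne_zero hb)).ne'
  have h2 : (Nat.gcd b (a / b)).factorization q = 0 := by rw [hgcd]; simp
  rw [Nat.factorization_gcd hb hdivnz, Finsupp.inf_apply, Nat.factorization_div hdvd,
    Finsupp.tsub_apply] at h2
  rw [Nat.min_eq_zero_iff] at h2
  omega

lemma eq_zero_aux : True := trivial

lemma unitary_mem_of_subset {a : ℕ} (ha : a ≠ 0) {S : Finset ℕ} (hS : S ⊆ a.primeFactors) :
    (∏ q ∈ S, q ^ a.factorization q) ∈ a.divisors.filter (fun b => IsUnitaryDivisor b a) := by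
  have hs : ∀ q ∈ S, Nat.Prime q := fun q hq => Nat.prime_of_mem_primeFactors (hS hq)
  have he : ∀ q ∈ S, 0 < a.factorization q := fun q hq =>
    Nat.Prime.factorization_pos_of_dvd (Nat.prime_of_mem_primeFactors (hS hq)) ha
      (Nat.dvd_of_mem_primeFactors (hS hq))
  set b := ∏ q ∈ S, q ^ a.factorization q with hbdef
  have hb : b ≠ 0 := (Finset.prod_pos (fun q hq => pow_pos (hs q hq).pos _)).ne'
  have hpf : b.primeFactors = S := primeFactors_prod_pow hs he
  have hdvd : b ∣ a := by
    rw [← Nat.factorization_le_iff_dvd hb ha]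
    intro q
    rw [fact_prod_pow hs]
    split_ifs <;> simp
  have hdivnz : a / b ≠ 0 := (Nat.div_pos (Nat.le_of_dvd (Nat.pos_of_ne_zero ha) hdvd)
    (Nat.pos_of_ne_zero hb)).ne'
  have hdisj : Disjoint b.primeFactors (a / b).primeFactors := by
    rw [Finset.disjoint_left]
    intro q hqb hqd
    rw [← Nat.support_factorization, Finsupp.mem_support_iff, Nat.factorization_div hdvd,
      Finsupp.tsub_apply] at hqd
    rw [hpf] at hqb
    have : b.factorization q = a.factorization q := by
      rw [hbdef, fact_prod_pow hs, if_pos hqb]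
    omega
  have hgcd : Nat.gcd b (a / b) = 1 := (Nat.disjoint_primeFactors hb hdivnz).mp hdisj
  have hu : IsUnitaryDivisor b a := ⟨hdvd, hgcd⟩
  exact Finset.mem_filter.mpr ⟨Nat.mem_divisors.mpr ⟨hdvd, ha⟩, hu⟩

lemma sum_unitary {a : ℕ} (ha : 0 < a) :
    (∑ b ∈ a.divisors.filter (fun b => IsUnitaryDivisor b a), (-1 : ℤ) ^ omega b)
      = if a = 1 then 1 else 0 := by
  have key : (∑ b ∈ a.divisors.filter (fun b => IsUnitaryDivisor b a), (-1 : ℤ) ^ omega b)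
      = ∑ S ∈ a.primeFactors.powerset, (-1 : ℤ) ^ S.card := by
    refine Finset.sum_nbij' (i := fun b => b.primeFactors)
      (j := fun S => ∏ q ∈ S, q ^ a.factorization q) ?_ ?_ ?_ ?_ ?_
    · intro b hb
      rw [Finset.mem_filter, Nat.mem_divisors] at hb
      exact Finset.mem_powerset.mpr (Nat.primeFactors_mono hb.1.1 ha.ne')
    · intro S hS
      exact unitary_mem_of_subset ha.ne' (Finset.mem_powerset.mp hS)
    · intro b hb
      rw [Finset.mem_filter, Nat.mem_divisors] at hb
      have hbnz : b ≠ 0 := by rintro rfl; exact hb.1.2 (Nat.eq_zero_of_zero_dvd hb.1.1)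
      calc ∏ q ∈ b.primeFactors, q ^ a.factorization q
          = ∏ q ∈ b.primeFactors, q ^ b.factorization q :=
            Finset.prod_congr rfl (fun q hq => by
              rw [unitary_exponent ha.ne' hbnz hb.2 hq])
        _ = b := Nat.factorization_prod_pow_eq_self hbnz
    · intro S hS
      have hSsub := Finset.mem_powerset.mp hS
      exact primeFactors_prod_pow
        (fun q hq => Nat.prime_of_mem_primeFactors (hSsub hq))
        (fun q hq => Nat.Prime.factorization_pos_of_dvd
          (Nat.prime_of_mem_primeFactors (hSsub hq)) ha.ne'
          (Nat.dvd_of_mem_primeFactors (hSsub hq)))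
    · intro b _; rfl
  rw [key, Finset.sum_powerset_neg_one_pow_card]
  congr 1
  simp only [Nat.primeFactors_eq_empty, eq_iff_iff]
  omega


set_option maxHeartbeats 2000000 in
/-- `Σ_{d ∣_{e*} n} μ^{(e)*}(d) = μ(n)²`: the sum of `μ^{(e)*}` over the e-unitary
divisors of `n` is `1` if `n` is squarefree and `0` otherwise. -/
theorem muEStar_sum_over_exp_unitary_divisors :
    ∀ n : ℕ, 0 < n →
      (∑ d ∈ n.divisors.filter (fun d => IsExpUnitaryDivisor d n), muEStar d) =
        if Squarefree n then 1 else 0 := by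
  intro n hn
  set s := n.primeFactors with hs_def
  have hsp : ∀ p ∈ s, Nat.Prime p := fun p hp => Nat.prime_of_mem_primeFactors hp
  have hapos : ∀ p ∈ s, 0 < n.factorization p := fun p hp =>
    Nat.Prime.factorization_pos_of_dvd (hsp p hp) hn.ne' (Nat.dvd_of_mem_primeFactors hp)
  set t : ℕ → Finset ℕ := fun p =>
    (n.factorization p).divisors.filter (fun b => IsUnitaryDivisor b (n.factorization p))
    with ht_def
  have key : (∑ d ∈ n.divisors.filter (fun d => IsExpUnitaryDivisor d n), muEStar d)
      = ∑ g ∈ s.pi t, ∏ x ∈ s.attach, (-1 : ℤ) ^ omega (g x.1 x.2) := by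
    refine Finset.sum_nbij' (i := fun d => (fun p _ => d.factorization p))
      (j := fun g => ∏ p ∈ s, p ^ (if h : p ∈ s then g p h else 0)) ?_ ?_ ?_ ?_ ?_
    · intro d hd
      rw [Finset.mem_filter] at hd
      obtain ⟨_, _, _, _, hun⟩ := hd
      refine Finset.mem_pi.mpr (fun p hp => ?_)
      exact Finset.mem_filter.mpr ⟨Nat.mem_divisors.mpr ⟨(hun p hp).1, (hapos p hp).ne'⟩,
        hun p hp⟩
    · intro g hg
      rw [Finset.mem_pi] at hg
      have hmem : ∀ p (hp : p ∈ s),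
          g p hp ∈ (n.factorization p).divisors ∧ IsUnitaryDivisor (g p hp) (n.factorization p) :=
        fun p hp => Finset.mem_filter.mp (hg p hp)
      have hepos : ∀ p ∈ s, 0 < (if h : p ∈ s then g p h else 0) := by
        intro p hp
        rw [dif_pos hp]
        exact Nat.pos_of_mem_divisors (hmem p hp).1
      set d := ∏ p ∈ s, p ^ (if h : p ∈ s then g p h else 0) with hd_def
      have hd0 : 0 < d := Finset.prod_pos (fun p hp => pow_pos (hsp p hp).pos _)
      have hpf : d.primeFactors = s := primeFactors_prod_pow hsp hepos
      have hfac : ∀ p (hp : p ∈ s), d.factorization p = g p hp := by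
        intro p hp
        rw [hd_def, fact_prod_pow hsp, if_pos hp, dif_pos hp]
      have hdvd : d ∣ n := by
        rw [← Nat.factorization_le_iff_dvd hd0.ne' hn.ne']
        intro p
        rw [hd_def, fact_prod_pow hsp]
        split_ifs with hp
        · exact Nat.le_of_dvd (hapos p hp) ((hmem p hp).2).1
        · exact Nat.zero_le _
      have hexp : IsExpUnitaryDivisor d n := by
        refine ⟨hd0, hn, hpf, fun p hp => ?_⟩
        rw [hfac p hp]
        exact (hmem p hp).2
      exact Finset.mem_filter.mpr ⟨Nat.mem_divisors.mpr ⟨hdvd, hn.ne'⟩, hexp⟩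
    · intro d hd
      rw [Finset.mem_filter] at hd
      obtain ⟨hdn, hd0, _, hpf, _⟩ := hd
      calc ∏ p ∈ s, p ^ (if h : p ∈ s then d.factorization p else 0)
          = ∏ p ∈ s, p ^ d.factorization p :=
            Finset.prod_congr rfl (fun p hp => by rw [dif_pos hp])
        _ = ∏ p ∈ d.primeFactors, p ^ d.factorization p := by rw [hpf]
        _ = d := Nat.factorization_prod_pow_eq_self hd0.ne'
    · intro g hg
      funext p hp
      have h1 : (∏ q ∈ s, q ^ (if h : q ∈ s then g q h else 0)).factorization p
          = if p ∈ s then (if h : p ∈ s then g p h else 0) else 0 := fact_prod_pow hsp _ p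
      show (∏ q ∈ s, q ^ (if h : q ∈ s then g q h else 0)).factorization p = g p hp
      rw [h1, if_pos hp, dif_pos hp]
    · intro d hd
      rw [Finset.mem_filter] at hd
      obtain ⟨_, _, _, hpf, _⟩ := hd
      rw [muEStar, hpf, ← Finset.prod_pow_eq_pow_sum]
      exact (Finset.prod_attach s (fun p => (-1 : ℤ) ^ omega (d.factorization p))).symm
  have eq1 : (∑ g ∈ s.pi t, ∏ x ∈ s.attach, (-1 : ℤ) ^ omega (g x.1 x.2))
      = ∏ p ∈ s, ∑ b ∈ t p, (-1 : ℤ) ^ omega b := (Finset.prod_sum s t (fun _ b => (-1 : ℤ) ^ omega b)).symm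
  rw [key, eq1]
  have : ∀ p ∈ s, (∑ b ∈ t p, (-1 : ℤ) ^ omega b)
      = if n.factorization p = 1 then 1 else 0 := fun p hp => sum_unitary (hapos p hp)
  rw [Finset.prod_congr rfl this]
  by_cases hsq : Squarefree n
  · rw [if_pos hsq]
    have h1 : ∀ p ∈ s, n.factorization p = 1 := by
      intro p hp
      exact le_antisymm ((Nat.squarefree_iff_factorization_le_one hn.ne').mp hsq p)
        (hapos p hp)
    rw [Finset.prod_congr rfl (fun p hp => by rw [if_pos (h1 p hp)])]
    simp
  · rw [if_neg hsq]
    have : ∃ p, 2 ≤ n.factorization p := by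
      by_contra hcon
      push_neg at hcon
      exact hsq ((Nat.squarefree_iff_factorization_le_one hn.ne').mpr (fun p =>
        Nat.lt_succ_iff.mp (hcon p)))
    obtain ⟨p, hp2⟩ := this
    have hps : p ∈ s := by
      rw [hs_def, ← Nat.support_factorization, Finsupp.mem_support_iff]
      exact (Nat.lt_of_lt_of_le Nat.zero_lt_two hp2).ne'
    refine Finset.prod_eq_zero hps ?_
    rw [if_neg (fun h => by rw [h] at hp2; exact absurd hp2 (by norm_num))]


end MuEStarProof
end

section
/- For every squarefree positive integer m with gcd(m, 6) = 1, the number 36m is e-unitary perfect, i.e., σ^{(e)*}(36m) = 72m. Consequently, there are infinitely many e-unitary perfect numbers. -/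
open scoped Classical BigOperators

lemma factaux (m b c : ℕ) (hm0 : m ≠ 0) :
    (2^b*3^c*m).factorization = Finsupp.single 2 b + Finsupp.single 3 c + m.factorization := by
  rw [Nat.factorization_mul (by positivity) hm0,
    Nat.factorization_mul (a := 2^b) (by positivity) (by positivity),
    Nat.Prime.factorization_pow Nat.prime_two, Nat.Prime.factorization_pow Nat.prime_three]

lemma pfaux (m b c : ℕ) (hm0 : m ≠ 0) (hb : b ≠ 0) (hc : c ≠ 0) :
    (2^b*3^c*m).primeFactors = {2,3} ∪ m.primeFactors := by
  rw [Nat.primeFactors_mul (by positivity) hm0,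
    Nat.primeFactors_mul (a := 2^b) (by positivity) (by positivity),
    Nat.primeFactors_pow _ hb, Nat.primeFactors_pow _ hc,
    Nat.Prime.primeFactors Nat.prime_two, Nat.Prime.primeFactors Nat.prime_three]
  rfl

lemma main_filter (m : ℕ) (hm : 0 < m) (hsf : Squarefree m) (hg : Nat.gcd m 6 = 1) :
    (36*m).divisors.filter (fun d => IsExpUnitaryDivisor d (36*m)) =
      ({6*m, 12*m, 18*m, 36*m} : Finset ℕ) := by
  have hm0 : m ≠ 0 := hm.ne'
  have h36 : (36:ℕ) = 2^2*3^2 := by norm_num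
  have h2m : ¬ (2 ∣ m) := by
    intro h
    have : (2:ℕ) ∣ 1 := hg ▸ Nat.dvd_gcd h (by norm_num)
    norm_num at this
  have h3m : ¬ (3 ∣ m) := by
    intro h
    have : (3:ℕ) ∣ 1 := hg ▸ Nat.dvd_gcd h (by norm_num)
    norm_num at this
  have h2pf : 2 ∉ m.primeFactors := fun h => h2m (Nat.dvd_of_mem_primeFactors h)
  have h3pf : 3 ∉ m.primeFactors := fun h => h3m (Nat.dvd_of_mem_primeFactors h)
  have hmf2 : m.factorization 2 = 0 := Nat.factorization_eq_zero_of_not_dvd h2m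
  have hmf3 : m.factorization 3 = 0 := Nat.factorization_eq_zero_of_not_dvd h3m
  have hmf1 : ∀ p ∈ m.primeFactors, m.factorization p = 1 := by
    intro p hp
    have h1 : m.factorization p ≤ 1 := hsf.natFactorization_le_one p
    have h2 : m.factorization p ≠ 0 := by
      rw [← Finsupp.mem_support_iff, Nat.support_factorization]; exact hp
    omega
  have hmf0 : ∀ p, p ∉ m.primeFactors → m.factorization p = 0 := by
    intro p hp
    rw [← Nat.support_factorization] at hp
    exact Finsupp.notMem_support_iff.mp hp
  have hfact : (36*m).factorization = Finsupp.single 2 2 + Finsupp.single 3 2 + m.factorization := by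
    rw [h36]; exact factaux m 2 2 hm0
  have hpf : (36*m).primeFactors = {2,3} ∪ m.primeFactors := by
    rw [h36]; exact pfaux m 2 2 hm0 (by norm_num) (by norm_num)
  have hf2 : (36*m).factorization 2 = 2 := by rw [hfact]; simp [hmf2]
  have hf3 : (36*m).factorization 3 = 2 := by rw [hfact]; simp [hmf3]
  have hfp : ∀ p ∈ m.primeFactors, (36*m).factorization p = 1 := by
    intro p hp
    have hp2 : p ≠ 2 := fun h => h2pf (h ▸ hp)
    have hp3 : p ≠ 3 := fun h => h3pf (h ▸ hp)
    rw [hfact]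
    simp [Finsupp.single_apply, hp2.symm, hp3.symm, hmf1 p hp]
  have hn0 : 36*m ≠ 0 := by positivity
  ext d
  simp only [Finset.mem_filter, Nat.mem_divisors]
  constructor
  · rintro ⟨⟨hdvd, -⟩, hd0, -, hdpf, hfac⟩
    -- exponent at 2
    obtain ⟨hb, -⟩ := hfac 2 (by rw [hpf]; simp)
    obtain ⟨hc, -⟩ := hfac 3 (by rw [hpf]; simp)
    rw [hf2] at hb; rw [hf3] at hc
    have hb' : d.factorization 2 = 1 ∨ d.factorization 2 = 2 :=
      (Nat.prime_two.eq_one_or_self_of_dvd _ hb)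
    have hc' : d.factorization 3 = 1 ∨ d.factorization 3 = 2 :=
      (Nat.prime_two.eq_one_or_self_of_dvd _ hc)
    have hdp : ∀ p ∈ m.primeFactors, d.factorization p = 1 := by
      intro p hp
      obtain ⟨h1, -⟩ := hfac p (by rw [hpf]; exact Finset.mem_union_right _ hp)
      rw [hfp p hp] at h1
      exact Nat.dvd_one.mp h1
    have hd : d = 2^(d.factorization 2) * 3^(d.factorization 3) * m := by
      apply Nat.eq_of_factorization_eq hd0.ne' (by positivity)
      intro p
      rw [factaux m _ _ hm0]
      by_cases hp2 : p = 2
      · subst hp2; simp [Finsupp.single_apply, hmf2]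
      · by_cases hp3 : p = 3
        · subst hp3; simp [Finsupp.single_apply, hmf3]
        · by_cases hpm : p ∈ m.primeFactors
          · simp [Finsupp.single_apply, Ne.symm hp2, Ne.symm hp3, hmf1 p hpm, hdp p hpm]
          · have hd0' : d.factorization p = 0 := by
              apply Finsupp.notMem_support_iff.mp
              rw [Nat.support_factorization, hdpf, hpf]
              simp [hp2, hp3, hpm]
            simp [Finsupp.single_apply, Ne.symm hp2, Ne.symm hp3, hmf0 p hpm, hd0']
    rcases hb' with h1 | h1 <;> rcases hc' with h2 | h2 <;>
      rw [h1, h2] at hd <;> norm_num at hd <;> simp [hd]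
  · intro hdmem
    have : ∃ b c, (b = 1 ∨ b = 2) ∧ (c = 1 ∨ c = 2) ∧ d = 2^b*3^c*m := by
      simp only [Finset.mem_insert, Finset.mem_singleton] at hdmem
      rcases hdmem with h | h | h | h
      · exact ⟨1, 1, Or.inl rfl, Or.inl rfl, by rw [h]; ring⟩
      · exact ⟨2, 1, Or.inr rfl, Or.inl rfl, by rw [h]; ring⟩
      · exact ⟨1, 2, Or.inl rfl, Or.inr rfl, by rw [h]; ring⟩
      · exact ⟨2, 2, Or.inr rfl, Or.inr rfl, by rw [h]; ring⟩
    obtain ⟨b, c, hb, hc, rfl⟩ := this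
    have hb0 : b ≠ 0 := by omega
    have hc0 : c ≠ 0 := by omega
    have hb2 : b ≤ 2 := by omega
    have hc2 : c ≤ 2 := by omega
    refine ⟨⟨?_, hn0⟩, by positivity, by positivity, ?_, ?_⟩
    · rw [h36]
      exact mul_dvd_mul (mul_dvd_mul (pow_dvd_pow 2 hb2) (pow_dvd_pow 3 hc2)) dvd_rfl
    · rw [pfaux m b c hm0 hb0 hc0, hpf]
    · intro p hp
      rw [hpf] at hp
      rw [factaux m b c hm0]
      simp only [Finset.mem_union, Finset.mem_insert, Finset.mem_singleton] at hp
      rcases hp with (rfl | rfl) | hp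
      · rw [hf2]
        simp only [Finsupp.coe_add, Pi.add_apply, Finsupp.single_apply, hmf2]
        norm_num
        rcases hb with rfl | rfl
        · exact ⟨one_dvd _, by norm_num⟩
        · exact ⟨dvd_rfl, by norm_num⟩
      · rw [hf3]
        simp only [Finsupp.coe_add, Pi.add_apply, Finsupp.single_apply, hmf3]
        norm_num
        rcases hc with rfl | rfl
        · exact ⟨one_dvd _, by norm_num⟩
        · exact ⟨dvd_rfl, by norm_num⟩
      · have hp2 : p ≠ 2 := fun h => h2pf (h ▸ hp)
        have hp3 : p ≠ 3 := fun h => h3pf (h ▸ hp)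
        rw [hfp p hp]
        simp only [Finsupp.coe_add, Pi.add_apply, Finsupp.single_apply,
          Ne.symm hp2, Ne.symm hp3, if_neg, hmf1 p hp]
        norm_num
        exact ⟨by simp [hp2, hp3], by simp [hp2, hp3]⟩

/-- For every squarefree `m` coprime to `6`, the number `36m` is e-unitary perfect;
consequently there are infinitely many e-unitary perfect numbers. -/
theorem e_unitary_perfect_36m_and_infinite :
    (∀ m : ℕ, 0 < m → Squarefree m → Nat.gcd m 6 = 1 →
      sigmaEStar (36 * m) = 2 * (36 * m)) ∧
    {n : ℕ | sigmaEStar n = 2 * n}.Infinite := by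
  have h1 : ∀ m : ℕ, 0 < m → Squarefree m → Nat.gcd m 6 = 1 →
      sigmaEStar (36 * m) = 2 * (36 * m) := by
    intro m hm hsf hg
    unfold sigmaEStar
    rw [main_filter m hm hsf hg]
    have e1 : (6*m) ∉ ({12*m, 18*m, 36*m} : Finset ℕ) := by simp; omega
    have e2 : (12*m) ∉ ({18*m, 36*m} : Finset ℕ) := by simp; omega
    have e3 : (18*m) ∉ ({36*m} : Finset ℕ) := by simp; omega
    rw [Finset.sum_insert e1, Finset.sum_insert e2, Finset.sum_insert e3,
      Finset.sum_singleton]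
    ring
  refine ⟨h1, ?_⟩
  have hsub : ((fun p => 36*p) '' {p : ℕ | p.Prime ∧ 3 < p}) ⊆ {n | sigmaEStar n = 2*n} := by
    rintro _ ⟨p, ⟨hp, hp3⟩, rfl⟩
    have hcop : Nat.gcd p 6 = 1 := by
      refine (Nat.Prime.coprime_iff_not_dvd hp).mpr ?_
      intro h
      have h6 := Nat.le_of_dvd (by norm_num) h
      interval_cases p <;> revert hp h <;> decide
    exact h1 p hp.pos hp.squarefree hcop
  have hinf : ({p : ℕ | p.Prime ∧ 3 < p}).Infinite := by
    have h2 : ({p : ℕ | p.Prime} \ Set.Iic 3).Infinite :=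
      Nat.infinite_setOf_prime.diff (Set.finite_Iic 3)
    have : {p : ℕ | p.Prime} \ Set.Iic 3 = {p : ℕ | p.Prime ∧ 3 < p} := by
      ext p; simp [Set.mem_diff, not_le]
    rwa [this] at h2
  exact (hinf.image (fun a _ b _ h => by omega)).mono hsub
end
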